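/- arXiv:1308.2905 — 7 statements merged into one kernel-verified Lean document; each statement's English description precedes it below -/
import Mathlib

section
/- Let T be the doubling map on [0,1] defined by Tx = 2x for x in [0,1/2] and Tx = 2x-1 for x in (1/2,1]. If 0 < a < 1/4 and b > 1/2, or if a < 1/2 and b > 3/4, then the only points x in [0,1] whose entire forward T-orbit avoids the open interval (a,b) are x = 0 and x = 1. -/
noncomputable def T (x : ℝ) : ℝ := if x ≤ 1/2 then 2*x else 2*x - 1

lemma lemA1 : ∀ k : ℕ, ∀ x : ℝ, 0 < x → x ≤ 1/2 → 1/4 < 2^k * x →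
    ∃ n, T^[n] x ∈ Set.Ioc (1/4 : ℝ) (1/2) := by
  intro k
  induction k with
  | zero =>
    intro x hx h2 h3
    simp only [pow_zero, one_mul] at h3
    exact ⟨0, h3, h2⟩
  | succ k ih =>
    intro x hx h2 h3
    by_cases hx4 : 1/4 < x
    · exact ⟨0, hx4, h2⟩
    · push_neg at hx4
      have hT : T x = 2*x := by unfold T; rw [if_pos h2]
      have h3' : 1/4 < 2^k * (2*x) := by
        rw [show (2:ℝ)^k * (2*x) = 2^(k+1) * x by ring]; exact h3
      obtain ⟨n, hn⟩ := ih (2*x) (by linarith) (by linarith) h3'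
      exact ⟨n+1, by rwa [Function.iterate_succ_apply, hT]⟩

lemma lemA1' (x : ℝ) (hx : 0 < x) (h2 : x ≤ 1/2) :
    ∃ n, T^[n] x ∈ Set.Ioc (1/4 : ℝ) (1/2) := by
  obtain ⟨k, hk⟩ := pow_unbounded_of_one_lt (1/(4*x)) (by norm_num : (1:ℝ) < 2)
  have h1 : (1:ℝ) < 2^k * (4*x) := by
    rw [div_lt_iff₀ (by positivity)] at hk; linarith
  apply lemA1 k x hx h2
  nlinarith [h1]

lemma lemA2 : ∀ k : ℕ, ∀ x : ℝ, 0 < x → x < 1 → 1/2 < 2^k * (1-x) →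
    ∃ n, T^[n] x ∈ Set.Ioc (1/4 : ℝ) (1/2) := by
  intro k
  induction k with
  | zero =>
    intro x hx h1 h3
    simp only [pow_zero, one_mul] at h3
    exact lemA1' x hx (by linarith)
  | succ k ih =>
    intro x hx h1 h3
    by_cases h2 : x ≤ 1/2
    · exact lemA1' x hx h2
    · push_neg at h2
      have hT : T x = 2*x - 1 := by unfold T; rw [if_neg (by linarith)]
      have h3' : 1/2 < 2^k * (1 - (2*x - 1)) := by
        rw [show (2:ℝ)^k * (1 - (2*x-1)) = 2^(k+1) * (1-x) by ring]; exact h3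
      obtain ⟨n, hn⟩ := ih (2*x - 1) (by linarith) (by linarith) h3'
      exact ⟨n+1, by rwa [Function.iterate_succ_apply, hT]⟩

lemma hit1 (x : ℝ) (hx : 0 < x) (h1 : x < 1) :
    ∃ n, T^[n] x ∈ Set.Ioc (1/4 : ℝ) (1/2) := by
  obtain ⟨k, hk⟩ := pow_unbounded_of_one_lt (1/(2*(1-x))) (by norm_num : (1:ℝ) < 2)
  have hpos : (0:ℝ) < 1 - x := by linarith
  have hh : (1:ℝ) < 2^k * (2*(1-x)) := by
    rw [div_lt_iff₀ (by positivity)] at hk; linarith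
  apply lemA2 k x hx h1
  nlinarith [hh]

lemma lemB2 : ∀ k : ℕ, ∀ x : ℝ, 1/2 ≤ x → x < 1 → 1/4 < 2^k * (1-x) →
    ∃ n, T^[n] x ∈ Set.Ico (1/2 : ℝ) (3/4) := by
  intro k
  induction k with
  | zero =>
    intro x hx h1 h3
    simp only [pow_zero, one_mul] at h3
    exact ⟨0, hx, show x < 3/4 by linarith⟩
  | succ k ih =>
    intro x hx h1 h3
    by_cases h34 : x < 3/4
    · exact ⟨0, hx, h34⟩
    · push_neg at h34
      have hT : T x = 2*x - 1 := by unfold T; rw [if_neg (by linarith)]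
      have h3' : 1/4 < 2^k * (1 - (2*x - 1)) := by
        rw [show (2:ℝ)^k * (1 - (2*x-1)) = 2^(k+1) * (1-x) by ring]; exact h3
      obtain ⟨n, hn⟩ := ih (2*x - 1) (by linarith) (by linarith) h3'
      exact ⟨n+1, by rwa [Function.iterate_succ_apply, hT]⟩

lemma lemB2' (x : ℝ) (hx : 1/2 ≤ x) (h1 : x < 1) :
    ∃ n, T^[n] x ∈ Set.Ico (1/2 : ℝ) (3/4) := by
  obtain ⟨k, hk⟩ := pow_unbounded_of_one_lt (1/(4*(1-x))) (by norm_num : (1:ℝ) < 2)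
  have hpos : (0:ℝ) < 1 - x := by linarith
  have hh : (1:ℝ) < 2^k * (4*(1-x)) := by
    rw [div_lt_iff₀ (by positivity)] at hk; linarith
  apply lemB2 k x hx h1
  nlinarith [hh]

lemma lemB1 : ∀ k : ℕ, ∀ x : ℝ, 0 < x → x < 1 → 1/2 ≤ 2^k * x →
    ∃ n, T^[n] x ∈ Set.Ico (1/2 : ℝ) (3/4) := by
  intro k
  induction k with
  | zero =>
    intro x hx h1 h3
    simp only [pow_zero, one_mul] at h3
    exact lemB2' x h3 h1
  | succ k ih =>
    intro x hx h1 h3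
    by_cases h2 : 1/2 ≤ x
    · exact lemB2' x h2 h1
    · push_neg at h2
      have hT : T x = 2*x := by unfold T; rw [if_pos (by linarith)]
      have h3' : 1/2 ≤ 2^k * (2*x) := by
        rw [show (2:ℝ)^k * (2*x) = 2^(k+1) * x by ring]; exact h3
      obtain ⟨n, hn⟩ := ih (2*x) (by linarith) (by linarith) h3'
      exact ⟨n+1, by rwa [Function.iterate_succ_apply, hT]⟩

lemma hit2 (x : ℝ) (hx : 0 < x) (h1 : x < 1) :
    ∃ n, T^[n] x ∈ Set.Ico (1/2 : ℝ) (3/4) := by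
  obtain ⟨k, hk⟩ := pow_unbounded_of_one_lt (1/(2*x)) (by norm_num : (1:ℝ) < 2)
  have hh : (1:ℝ) < 2^k * (2*x) := by
    rw [div_lt_iff₀ (by positivity)] at hk; linarith
  apply lemB1 k x hx h1
  nlinarith [hh]

theorem stmt_0 (a b : ℝ) (ha : 0 < a) (hab : a < b) (hb : b < 1)
    (h : (a < 1/4 ∧ 1/2 < b) ∨ (a < 1/2 ∧ 3/4 < b)) :
    {x : ℝ | x ∈ Set.Icc (0:ℝ) 1 ∧ ∀ n : ℕ, T^[n] x ∉ Set.Ioo a b} = {0, 1} := by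
  ext x
  simp only [Set.mem_setOf_eq, Set.mem_insert_iff, Set.mem_singleton_iff,
    Set.mem_Icc, Set.mem_Ioo]
  constructor
  · rintro ⟨⟨hx0, hx1⟩, horb⟩
    by_contra hc
    push_neg at hc
    obtain ⟨h0, h1⟩ := hc
    have hx0' : 0 < x := lt_of_le_of_ne hx0 (Ne.symm h0)
    have hx1' : x < 1 := lt_of_le_of_ne hx1 h1
    rcases h with ⟨ha4, hb2⟩ | ⟨ha2, hb4⟩
    · obtain ⟨n, hn1, hn2⟩ := hit1 x hx0' hx1'
      exact horb n ⟨by linarith, by linarith⟩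
    · obtain ⟨n, hn1, hn2⟩ := hit2 x hx0' hx1'
      exact horb n ⟨by linarith, by linarith⟩
  · rintro (rfl | rfl)
    · refine ⟨⟨le_refl 0, by norm_num⟩, ?_⟩
      intro n
      have hfix : T^[n] (0:ℝ) = 0 := Function.iterate_fixed (by unfold T; norm_num) n
      rw [hfix]
      rintro ⟨ha1, -⟩; linarith
    · refine ⟨⟨by norm_num, le_refl 1⟩, ?_⟩
      intro n
      have hfix : T^[n] (1:ℝ) = 1 := Function.iterate_fixed (by unfold T; norm_num) n
      rw [hfix]
      rintro ⟨-, hb1⟩; linarith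
end

section
/- For every n ≥ 3, the set {(2^n-2)/(2^n-1), (2^n-3)/(2^n-1), (2^n-5)/(2^n-1), (2^n-9)/(2^n-1), ..., (2^{n-1}-1)/(2^n-1)} (i.e., the points (2^n - 1 - 2^k)/(2^n-1) for k = 0,...,n-1) forms an n-cycle for the doubling map T, and this cycle is contained in the interval [(2^{n-1}-1)/(2^n-1), 1]. -/
/-- `C` is an `n`-cycle (periodic orbit of prime period `n`) for the doubling map. -/
def IsCycle (n : ℕ) (C : Set ℝ) : Prop :=
  ∃ x : ℝ, x ∈ Set.Icc (0:ℝ) 1 ∧ T^[n] x = x ∧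
    (∀ i < n, ∀ j < n, i ≠ j → T^[i] x ≠ T^[j] x) ∧
    C = {y | ∃ i < n, T^[i] x = y}

lemma eight_le_pow (n : ℕ) (hn : 3 ≤ n) : (8:ℝ) ≤ 2^n := by
  calc (8:ℝ) = 2^3 := by norm_num
  _ ≤ 2^n := pow_le_pow_right₀ one_le_two hn

lemma orbit_formula (n : ℕ) (hn : 3 ≤ n) : ∀ i < n,
    T^[i] (1 - 1/((2:ℝ)^n - 1)) = 1 - 2^i/((2:ℝ)^n - 1) := by
  have hD : (0:ℝ) < 2^n - 1 := by have := eight_le_pow n hn; linarith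
  intro i
  induction i with
  | zero => intro _; simp
  | succ i ih =>
    intro h
    have hi : i < n := by omega
    rw [Function.iterate_succ_apply', ih hi]
    have h2 : (2:ℝ)^(i+1) ≤ 2^(n-1) := pow_le_pow_right₀ one_le_two (by omega)
    have h3 : (2:ℝ)^(n-1) * 2 = 2^n := by
      rw [← pow_succ]; congr 1; omega
    have h4 : (4:ℝ) ≤ 2^(n-1) := by
      calc (4:ℝ) = 2^2 := by norm_num
      _ ≤ 2^(n-1) := pow_le_pow_right₀ one_le_two (by omega)
    have hlt : (2:ℝ)^i / (2^n - 1) < 1/2 := by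
      rw [div_lt_iff₀ hD]
      have : (2:ℝ)^(i+1) = 2^i * 2 := by ring
      nlinarith
    have hgt : ¬ (1 - 2^i/((2:ℝ)^n - 1) ≤ 1/2) := by linarith
    unfold T
    rw [if_neg hgt]
    field_simp
    ring

theorem stmt_2 (n : ℕ) (hn : 3 ≤ n) :
    IsCycle n {y : ℝ | ∃ k < n, y = ((2:ℝ)^n - 1 - 2^k) / (2^n - 1)} ∧
    {y : ℝ | ∃ k < n, y = ((2:ℝ)^n - 1 - 2^k) / (2^n - 1)} ⊆
      Set.Icc (((2:ℝ)^(n-1) - 1) / (2^n - 1)) 1 := by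
  have hD : (0:ℝ) < 2^n - 1 := by have := eight_le_pow n hn; linarith
  have hDne : ((2:ℝ)^n - 1) ≠ 0 := ne_of_gt hD
  have hform : ∀ k : ℕ, ((2:ℝ)^n - 1 - 2^k) / (2^n - 1) = 1 - 2^k/((2:ℝ)^n - 1) := by
    intro k; field_simp
  constructor
  · refine ⟨1 - 1/((2:ℝ)^n - 1), ⟨?_, ?_⟩, ?_, ?_, ?_⟩
    · have h1 : 1/((2:ℝ)^n - 1) ≤ 1 := by
        rw [div_le_one hD]; have := eight_le_pow n hn; linarith
      linarith
    · have h1 : 0 < 1/((2:ℝ)^n - 1) := by positivity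
      linarith
    · -- period n
      obtain ⟨m, rfl⟩ : ∃ m, n = m + 1 := ⟨n - 1, by omega⟩
      rw [Function.iterate_succ_apply', orbit_formula (m+1) hn m (by omega)]
      have hle : 1 - (2:ℝ)^m/((2:ℝ)^(m+1) - 1) ≤ 1/2 := by
        have h2 : (2:ℝ)^(m+1) = 2 * 2^m := by ring
        have hhalf : (1:ℝ)/2 ≤ 2^m/((2:ℝ)^(m+1) - 1) := by
          rw [le_div_iff₀ hD]; linarith
        linarith
      unfold T
      rw [if_pos hle]
      field_simp
      ring
    · -- injectivity
      intro i hi j hj hij heq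
      rw [orbit_formula n hn i hi, orbit_formula n hn j hj] at heq
      have h2 : (2:ℝ)^i / (2^n-1) = 2^j / (2^n-1) := by linarith
      field_simp at h2
      exact hij ((pow_right_inj₀ (by norm_num) (by norm_num)).mp h2)
    · -- set equality
      ext y
      simp only [Set.mem_setOf_eq]
      constructor
      · rintro ⟨k, hk, rfl⟩
        exact ⟨k, hk, by rw [orbit_formula n hn k hk, hform k]⟩
      · rintro ⟨i, hi, rfl⟩
        exact ⟨i, hi, by rw [orbit_formula n hn i hi, hform i]⟩
  · rintro y ⟨k, hk, rfl⟩
    have h2k : (2:ℝ)^k ≤ 2^(n-1) := pow_le_pow_right₀ one_le_two (by omega)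
    have h3 : (2:ℝ)^(n-1) * 2 = 2^n := by rw [← pow_succ]; congr 1; omega
    have hkpos : (0:ℝ) < 2^k := by positivity
    constructor
    · rw [div_le_div_iff₀ hD hD]
      nlinarith
    · rw [div_le_one hD]; linarith
end

section
/- If 0 < a < b < 1/2, then there are at most finitely many integers n ≥ 3 such that every n-cycle of the doubling map T intersects the open interval (a,b). Equivalently, for all sufficiently large n there is an n-cycle of T disjoint from (a,b). -/
lemma two_pow_le {n m : ℕ} (h : n ≤ m) : (2:ℝ)^n ≤ 2^m := pow_le_pow_right₀ one_le_two h

lemma Dpos {n : ℕ} (hn : 1 ≤ n) : (0:ℝ) < 2^n - 1 := by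
  have : (2:ℝ)^1 ≤ 2^n := two_pow_le hn
  norm_num at this; linarith

lemma step_lemma {n j : ℕ} (hj : j + 2 ≤ n) :
    T ((((2:ℝ)^n - 1) - 2^j) / ((2:ℝ)^n - 1)) =
      (((2:ℝ)^n - 1) - 2^(j+1)) / ((2:ℝ)^n - 1) := by
  have hD : (0:ℝ) < 2^n - 1 := Dpos (by omega)
  have h2j : (2:ℝ)^(j+1) < 2^n - 1 := by
    have h1 : (2:ℝ)^(j+1) ≤ 2^(n-1) := two_pow_le (by omega)
    have h2 : (2:ℝ)^(n-1) * 2 = 2^n := by rw [← pow_succ]; congr 1; omega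
    have h3 : (2:ℝ)^1 ≤ 2^(n-1) := two_pow_le (by omega)
    norm_num at h3; nlinarith
  have hx : ¬ ((((2:ℝ)^n - 1) - 2^j) / ((2:ℝ)^n - 1) ≤ 1/2) := by
    rw [not_le, lt_div_iff₀ hD]
    have : (2:ℝ)^(j+1) = 2 * 2^j := by ring
    nlinarith
  simp only [T, if_neg hx]
  field_simp
  ring

theorem stmt_3 (a b : ℝ) (ha : 0 < a) (hab : a < b) (hb : b < 1/2) :
    {n : ℕ | 3 ≤ n ∧ ∀ C : Set ℝ, IsCycle n C → (C ∩ Set.Ioo a b).Nonempty}.Finite := by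
  obtain ⟨N, hN⟩ := pow_unbounded_of_one_lt (R := ℝ) (1 / (1/2 - b)) one_lt_two
  apply Set.Finite.subset (Set.finite_Icc 0 (N + 3))
  intro n hn
  simp only [Set.mem_setOf_eq] at hn
  obtain ⟨hn3, hall⟩ := hn
  simp only [Set.mem_Icc]
  by_contra hlt
  push_neg at hlt
  have hnN : N + 4 ≤ n := by omega
  -- key size facts
  set D : ℝ := 2^n - 1 with hD_def
  have hD : (0:ℝ) < D := Dpos (by omega)
  have hhalf : (0:ℝ) < 1/2 - b := by linarith
  -- b * D ≤ 2^(n-1) - 1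
  have hpow2 : (2:ℝ)^(n-1) * 2 = 2^n := by rw [← pow_succ]; congr 1; omega
  have hbig : b * D ≤ 2^(n-1) - 1 := by
    have h1 : (1:ℝ) / (1/2 - b) < 2^N := hN
    have h2 : (2:ℝ)^N ≤ 2^n := two_pow_le (by omega)
    have h3 : (1:ℝ) < (1/2 - b) * 2^n := by
      rw [div_lt_iff₀ hhalf] at h1
      nlinarith
    nlinarith
  -- the cycle point
  set x : ℝ := ((2:ℝ)^(n-1) - 1) / D with hx_def
  have hxD : x = (D - 2^(n-1)) / D := by
    rw [hx_def]; congr 1; rw [hD_def]; nlinarith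
  have h1n : (1:ℝ) ≤ 2^(n-1) := by
    have := two_pow_le (show 0 ≤ n - 1 by omega); norm_num at this; linarith
  -- first step : T x = (D - 2^0)/D
  have hfirst : T x = (D - 2^0) / D := by
    have hxle : x ≤ 1/2 := by
      rw [hx_def, div_le_iff₀ hD]
      nlinarith
    rw [T, if_pos hxle, hx_def]
    rw [pow_zero]
    field_simp
    rw [hD_def]
    nlinarith
  -- iteration
  have hiter : ∀ k : ℕ, k + 2 ≤ n → T^[k+1] x = (D - 2^k) / D := by
    intro k
    induction k with
    | zero => intro _; simpa using hfirst
    | succ m ih =>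
      intro hm
      rw [Function.iterate_succ_apply', ih (by omega), step_lemma (by omega)]
  -- the orbit description
  have horb : ∀ i, i < n → T^[i] x = (D - 2^(if i = 0 then n-1 else i-1)) / D := by
    intro i hi
    rcases Nat.eq_zero_or_pos i with h0 | h0
    · subst h0; simpa using hxD
    · obtain ⟨k, rfl⟩ : ∃ k, i = k + 1 := ⟨i - 1, by omega⟩
      rw [hiter k (by omega)]
      simp
  -- periodicity
  have hper : T^[n] x = x := by
    obtain ⟨k, rfl⟩ : ∃ k, n = k + 2 := ⟨n - 2, by omega⟩
    have : T^[k+2] x = T (T^[k+1] x) := Function.iterate_succ_apply' T (k+1) x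
    rw [this, hiter k (by omega), step_lemma (le_refl _), hxD]
    norm_num
    rw [hD_def]
  -- distinctness
  have hinj : ∀ i < n, ∀ j < n, i ≠ j → T^[i] x ≠ T^[j] x := by
    intro i hi j hj hij heq
    rw [horb i hi, horb j hj] at heq
    have pinj : ∀ p q : ℕ, (2:ℝ)^p = 2^q → p = q := by
      intro p q h
      by_contra hne
      rcases Nat.lt_or_ge p q with hlt | hge
      · exact absurd h (ne_of_lt (pow_lt_pow_right₀ one_lt_two hlt))
      · have : q < p := by omega
        exact absurd h.symm (ne_of_lt (pow_lt_pow_right₀ one_lt_two this))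
    field_simp at heq
    split_ifs at heq <;> (have := pinj _ _ (sub_right_inj.mp heq)) <;> omega
  -- all orbit points ≥ b
  have hge : ∀ i, i < n → b ≤ T^[i] x := by
    intro i hi
    rw [horb i hi]
    rw [le_div_iff₀ hD]
    have he : (if i = 0 then n-1 else i-1) ≤ n - 1 := by split_ifs <;> omega
    have h2e : (2:ℝ)^(if i = 0 then n-1 else i-1) ≤ 2^(n-1) := two_pow_le he
    have : D - 2^(n-1) = 2^(n-1) - 1 := by rw [hD_def]; nlinarith
    nlinarith
  -- conclude
  have hx01 : x ∈ Set.Icc (0:ℝ) 1 := by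
    constructor
    · apply div_nonneg (by linarith) hD.le
    · rw [div_le_one hD, hD_def]
      nlinarith
  have hcyc : IsCycle n {y | ∃ i < n, T^[i] x = y} := ⟨x, hx01, hper, hinj, rfl⟩
  obtain ⟨y, hyC, hyI⟩ := hall _ hcyc
  obtain ⟨i, hi, hiy⟩ := hyC
  have : b ≤ y := hiy ▸ hge i hi
  exact absurd hyI.2 (not_lt.mpr this)
end

section
/- For every n ≥ 3 there exists an n-cycle of the doubling map T which is disjoint from the open interval (3/7, 4/7). -/
lemma build (n : ℕ) (hn : 1 ≤ n) (s : ℕ → ℝ)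
    (hmem : s 0 ∈ Set.Icc (0:ℝ) 1)
    (hstep : ∀ i, i + 1 < n → T (s i) = s (i+1))
    (hwrap : T (s (n-1)) = s 0)
    (hinj : ∀ i, ∀ j, i < j → j < n → s i ≠ s j)
    (havoid : ∀ i < n, s i ∉ Set.Ioo (3/7:ℝ) (4/7)) :
    ∃ C, IsCycle n C ∧ C ∩ Set.Ioo (3/7:ℝ) (4/7) = ∅ := by
  have hiter : ∀ i < n, T^[i] (s 0) = s i := by
    intro i hi
    induction i with
    | zero => simp
    | succ m ih =>
        rw [Function.iterate_succ_apply', ih (by omega)]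
        exact hstep m hi
  have hper : T^[n] (s 0) = s 0 := by
    have h : n = (n-1) + 1 := by omega
    rw [h, Function.iterate_succ_apply', hiter (n-1) (by omega)]
    exact hwrap
  refine ⟨{y | ∃ i < n, T^[i] (s 0) = y}, ⟨s 0, hmem, hper, ?_, rfl⟩, ?_⟩
  · intro i hi j hj hij
    rw [hiter i hi, hiter j hj]
    rcases lt_or_gt_of_ne hij with h | h
    · exact hinj i j h hj
    · exact (hinj j i h hi).symm
  · rw [Set.eq_empty_iff_forall_notMem]
    rintro y ⟨⟨i, hi, hy⟩, hmem'⟩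
    rw [hiter i hi] at hy
    exact havoid i hi (hy ▸ hmem')

lemma pow4_le {a b : ℕ} (h : a ≤ b) : (4:ℝ)^a ≤ 4^b :=
  pow_le_pow_right₀ (by norm_num) h

lemma pow4_lt {a b : ℕ} (h : a < b) : (4:ℝ)^a * 4 ≤ 4^b := by
  have := pow4_le (Nat.succ_le_of_lt h)
  rwa [pow_succ] at this

lemma pow4_pos (a : ℕ) : (0:ℝ) < 4^a := by positivity

lemma pow4_one (a : ℕ) : (1:ℝ) ≤ 4^a := one_le_pow₀ (by norm_num)

lemma T_lo {x : ℝ} (h : x ≤ 1/2) : T x = 2*x := if_pos h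
lemma T_hi {x : ℝ} (h : ¬ x ≤ 1/2) : T x = 2*x - 1 := if_neg h

lemma odd_case (k : ℕ) (hk : 1 ≤ k) :
    ∃ C, IsCycle (2*k+1) C ∧ C ∩ Set.Ioo (3/7:ℝ) (4/7) = ∅ := by
  set Q : ℝ := 4^k with hQdef
  have hQ4 : (4:ℝ) ≤ Q := by simpa using pow4_le hk
  set D : ℝ := 3*(2*Q - 1) with hDdef
  have hD : (0:ℝ) < D := by simp only [hDdef]; nlinarith
  set s : ℕ → ℝ := fun i =>
    (if Even i then (1:ℝ) else 2) * (2*Q - 1 - 4^(i/2)) / D with hsdef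
  have seval_e : ∀ j : ℕ, s (2*j) = (2*Q - 1 - 4^j) / D := by
    intro j
    simp only [hsdef]
    rw [if_pos ⟨j, by omega⟩]
    have h2 : 2*j/2 = j := by omega
    rw [h2]; ring
  have seval_o : ∀ j : ℕ, s (2*j+1) = 2*(2*Q - 1 - 4^j) / D := by
    intro j
    have h2 : (2*j+1)/2 = j := by omega
    simp only [hsdef, h2]
    rw [if_neg (Nat.not_even_iff_odd.mpr ⟨j, rfl⟩)]
  apply build (2*k+1) (by omega) s
  · -- s 0 ∈ Icc 0 1
    have h0 : s 0 = (2*Q - 1 - 1) / D := by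
      have := seval_e 0; simpa using this
    rw [h0]
    constructor
    · apply div_nonneg (by nlinarith) hD.le
    · rw [div_le_one hD]; nlinarith
  · -- hstep
    intro i hi
    rcases Nat.even_or_odd i with ⟨j, hj⟩ | ⟨j, hj⟩
    · -- i = 2j, i+1 < 2k+1 → j ≤ k-1
      have hij : i = 2*j := by omega
      have hjk : j + 1 ≤ k := by omega
      have hp : (4:ℝ)^(j) ≤ Q := pow4_le (by omega)
      subst hij
      rw [seval_e j, seval_o j]
      rw [T_lo]
      · ring
      · rw [div_le_iff₀ hD]; nlinarith [pow4_pos j]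
    · have hij : i = 2*j + 1 := by omega
      have hjk : j + 1 ≤ k := by omega
      have hp : (4:ℝ)^(j+1) ≤ Q := pow4_le hjk
      rw [pow_succ] at hp
      subst hij
      have h2 : 2*j + 1 + 1 = 2*(j+1) := by ring
      rw [seval_o j, h2, seval_e (j+1)]
      rw [T_hi]
      · have hQ1 : (0:ℝ) < 2*Q - 1 := by nlinarith
        rw [pow_succ, hDdef]
        field_simp
        ring
      · rw [not_le, lt_div_iff₀ hD]; nlinarith
  · -- hwrap
    have h2 : 2*k + 1 - 1 = 2*k := by omega
    rw [h2, seval_e k, ← hQdef]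
    rw [T_lo]
    · have h0 : s 0 = (2*Q - 1 - 1) / D := by simpa using seval_e 0
      rw [h0]; ring
    · rw [div_le_iff₀ hD]; nlinarith
  · -- hinj
    have evlt : ∀ a b : ℕ, b ≤ k → a < b → s (2*b) < s (2*a) := by
      intro a b hbk hab
      rw [seval_e, seval_e, div_lt_div_iff_of_pos_right hD]
      have := pow4_lt hab
      nlinarith [pow4_pos a]
    have odlt : ∀ a b : ℕ, a < b → s (2*b+1) < s (2*a+1) := by
      intro a b hab
      rw [seval_o, seval_o, div_lt_div_iff_of_pos_right hD]
      have := pow4_lt hab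
      nlinarith [pow4_pos a]
    have eo : ∀ a b : ℕ, a ≤ k → b + 1 ≤ k → s (2*a) < s (2*b+1) := by
      intro a b hak hbk
      rw [seval_e, seval_o, div_lt_div_iff_of_pos_right hD]
      have h1 : (4:ℝ)^b * 4 ≤ Q := by
        have := pow4_le hbk; rwa [pow_succ] at this
      nlinarith [pow4_one a, pow4_pos b]
    intro i j hij hjn
    rcases Nat.even_or_odd i with ⟨a, ha⟩ | ⟨a, ha⟩ <;>
      rcases Nat.even_or_odd j with ⟨b, hb⟩ | ⟨b, hb⟩
    · have hi' : i = 2*a := by omega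
      have hj' : j = 2*b := by omega
      subst hi'; subst hj'
      exact (evlt a b (by omega) (by omega)).ne'
    · have hi' : i = 2*a := by omega
      have hj' : j = 2*b + 1 := by omega
      subst hi'; subst hj'
      exact (eo a b (by omega) (by omega)).ne
    · have hi' : i = 2*a + 1 := by omega
      have hj' : j = 2*b := by omega
      subst hi'; subst hj'
      exact (eo b a (by omega) (by omega)).ne'
    · have hi' : i = 2*a + 1 := by omega
      have hj' : j = 2*b + 1 := by omega
      subst hi'; subst hj'
      exact (odlt a b (by omega)).ne'
  · -- havoid
    intro i hi hmem
    rcases Nat.even_or_odd i with ⟨j, hj⟩ | ⟨j, hj⟩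
    · have hi' : i = 2*j := by omega
      subst hi'
      rw [seval_e] at hmem
      obtain ⟨h37, h47⟩ := hmem
      rw [lt_div_iff₀ hD] at h37
      nlinarith [pow4_one j]
    · have hi' : i = 2*j + 1 := by omega
      subst hi'
      have hjk : j + 1 ≤ k := by omega
      have h1 : (4:ℝ)^j * 4 ≤ Q := by
        have := pow4_le hjk; rwa [pow_succ] at this
      rw [seval_o] at hmem
      obtain ⟨h37, h47⟩ := hmem
      rw [div_lt_iff₀ hD] at h47
      nlinarith [pow4_one j]

lemma even_case (k : ℕ) :
    ∃ C, IsCycle (2*k+4) C ∧ C ∩ Set.Ioo (3/7:ℝ) (4/7) = ∅ := by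
  set P : ℝ := 4^k with hPdef
  have hP1 : (1:ℝ) ≤ P := pow4_one k
  set D : ℝ := 3*(16*P - 1) with hDdef
  have hD : (0:ℝ) < D := by simp only [hDdef]; nlinarith
  set s : ℕ → ℝ := fun i =>
    (if i = 2*k+3 then 8*P + 1
      else (if Even i then (1:ℝ) else 2) * (16*P - 1 + 3*4^(i/2))) / D with hsdef
  have seval_sp : s (2*k+3) = (8*P + 1) / D := by
    simp [hsdef]
  have seval_e : ∀ j : ℕ, s (2*j) = (16*P - 1 + 3*4^j) / D := by
    intro j
    have h2 : 2*j/2 = j := by omega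
    simp only [hsdef, h2]
    rw [if_neg (by omega), if_pos ⟨j, by omega⟩]
    ring
  have seval_o : ∀ j : ℕ, j ≤ k → s (2*j+1) = 2*(16*P - 1 + 3*4^j) / D := by
    intro j hj
    have h2 : (2*j+1)/2 = j := by omega
    simp only [hsdef, h2]
    rw [if_neg (by omega), if_neg (Nat.not_even_iff_odd.mpr ⟨j, rfl⟩)]
  apply build (2*k+4) (by omega) s
  · -- s 0 ∈ Icc 0 1
    have h0 : s 0 = (16*P - 1 + 3*1) / D := by simpa using seval_e 0
    rw [h0]
    constructor
    · apply div_nonneg (by nlinarith) hD.le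
    · rw [div_le_one hD]; nlinarith
  · -- hstep
    intro i hi
    rcases Nat.even_or_odd i with ⟨j, hj⟩ | ⟨j, hj⟩
    · have hij : i = 2*j := by omega
      subst hij
      rcases Nat.lt_or_ge j (k+1) with hjk | hjk
      · -- j ≤ k : low branch
        have hp : (4:ℝ)^j ≤ P := pow4_le (by omega)
        rw [seval_e j, seval_o j (by omega)]
        rw [T_lo]
        · ring
        · rw [div_le_iff₀ hD]; nlinarith [pow4_pos j]
      · -- j = k+1
        have hj' : j = k + 1 := by omega
        subst hj'
        have h4 : (4:ℝ)^(k+1) = 4*P := by rw [pow_succ, hPdef]; ring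
        have h3 : 2*(k+1) + 1 = 2*k+3 := by ring
        rw [seval_e (k+1), h3, seval_sp, h4]
        rw [T_hi]
        · have hQ1 : (16*P - 1) ≠ 0 := ne_of_gt (by linarith)
          rw [hDdef]; field_simp; ring
        · rw [not_le, lt_div_iff₀ hD]; nlinarith
    · have hij : i = 2*j + 1 := by omega
      have hjk : j ≤ k := by omega
      subst hij
      have h2 : 2*j + 1 + 1 = 2*(j+1) := by ring
      rw [seval_o j hjk, h2, seval_e (j+1)]
      rw [T_hi]
      · have hQ1 : (16*P - 1) ≠ 0 := ne_of_gt (by linarith)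
        rw [pow_succ, hDdef]; field_simp; ring
      · rw [not_le, lt_div_iff₀ hD]; nlinarith [pow4_one j]
  · -- hwrap
    have h2 : 2*k + 4 - 1 = 2*k+3 := by omega
    rw [h2, seval_sp]
    rw [T_lo]
    · have h0 : s 0 = (16*P - 1 + 3*1) / D := by simpa using seval_e 0
      rw [h0]; ring
    · rw [div_le_iff₀ hD]; nlinarith
  · -- hinj
    have splt_e : ∀ a : ℕ, s (2*k+3) < s (2*a) := by
      intro a
      rw [seval_sp, seval_e, div_lt_div_iff_of_pos_right hD]
      nlinarith [pow4_one a]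
    have splt_o : ∀ a : ℕ, a ≤ k → s (2*k+3) < s (2*a+1) := by
      intro a ha
      rw [seval_sp, seval_o a ha, div_lt_div_iff_of_pos_right hD]
      nlinarith [pow4_one a]
    have evlt : ∀ a b : ℕ, a < b → s (2*a) < s (2*b) := by
      intro a b hab
      rw [seval_e, seval_e, div_lt_div_iff_of_pos_right hD]
      nlinarith [pow4_lt hab, pow4_one a]
    have odlt : ∀ a b : ℕ, a < b → b ≤ k → s (2*a+1) < s (2*b+1) := by
      intro a b hab hbk
      rw [seval_o a (by omega), seval_o b hbk, div_lt_div_iff_of_pos_right hD]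
      nlinarith [pow4_lt hab, pow4_one a]
    have eo : ∀ a b : ℕ, a ≤ k+1 → b ≤ k → s (2*a) < s (2*b+1) := by
      intro a b hak hbk
      rw [seval_e, seval_o b hbk, div_lt_div_iff_of_pos_right hD]
      have h1 : (4:ℝ)^a ≤ 4*P := by
        have h4 : (4:ℝ)^(k+1) = 4*P := by rw [pow_succ, hPdef]; ring
        have := pow4_le hak
        linarith
      nlinarith [pow4_one b]
    intro i j hij hjn
    rcases Nat.lt_or_ge j (2*k+3) with hj3 | hj3
    · -- both i, j < 2k+3
      rcases Nat.even_or_odd i with ⟨a, ha⟩ | ⟨a, ha⟩ <;>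
        rcases Nat.even_or_odd j with ⟨b, hb⟩ | ⟨b, hb⟩
      · have hi' : i = 2*a := by omega
        have hj' : j = 2*b := by omega
        subst hi'; subst hj'
        exact (evlt a b (by omega)).ne
      · have hi' : i = 2*a := by omega
        have hj' : j = 2*b + 1 := by omega
        subst hi'; subst hj'
        exact (eo a b (by omega) (by omega)).ne
      · have hi' : i = 2*a + 1 := by omega
        have hj' : j = 2*b := by omega
        subst hi'; subst hj'
        exact (eo b a (by omega) (by omega)).ne'
      · have hi' : i = 2*a + 1 := by omega
        have hj' : j = 2*b + 1 := by omega
        subst hi'; subst hj'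
        exact (odlt a b (by omega) (by omega)).ne
    · -- j = 2k+3
      have hj' : j = 2*k+3 := by omega
      subst hj'
      rcases Nat.even_or_odd i with ⟨a, ha⟩ | ⟨a, ha⟩
      · have hi' : i = 2*a := by omega
        subst hi'
        exact (splt_e a).ne'
      · have hi' : i = 2*a + 1 := by omega
        subst hi'
        exact (splt_o a (by omega)).ne'
  · -- havoid
    intro i hi hmem
    rcases Nat.lt_or_ge i (2*k+3) with hi3 | hi3
    · rcases Nat.even_or_odd i with ⟨j, hj⟩ | ⟨j, hj⟩
      · have hi' : i = 2*j := by omega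
        subst hi'
        rw [seval_e] at hmem
        obtain ⟨h37, h47⟩ := hmem
        rcases Nat.lt_or_ge j (k+1) with hjk | hjk
        · -- small side
          have hp : (4:ℝ)^j ≤ P := pow4_le (by omega)
          rw [lt_div_iff₀ hD] at h37
          nlinarith
        · -- j = k+1, big side
          have hj' : j = k+1 := by omega
          subst hj'
          have h4 : (4:ℝ)^(k+1) = 4*P := by rw [pow_succ, hPdef]; ring
          rw [h4, div_lt_iff₀ hD] at h47
          nlinarith
      · have hi' : i = 2*j + 1 := by omega
        subst hi'
        rw [seval_o j (by omega)] at hmem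
        obtain ⟨h37, h47⟩ := hmem
        rw [div_lt_iff₀ hD] at h47
        nlinarith [pow4_one j]
    · have hi' : i = 2*k+3 := by omega
      subst hi'
      rw [seval_sp] at hmem
      obtain ⟨h37, h47⟩ := hmem
      rw [lt_div_iff₀ hD] at h37
      nlinarith


theorem stmt_9 (n : ℕ) (hn : 3 ≤ n) :
    ∃ C : Set ℝ, IsCycle n C ∧ C ∩ Set.Ioo (3/7 : ℝ) (4/7) = ∅ := by
  rcases Nat.even_or_odd n with ⟨m, hm⟩ | ⟨m, hm⟩
  · have hm4 : 2 ≤ m := by omega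
    have h := even_case (m - 2)
    have hn' : 2*(m-2)+4 = n := by omega
    rwa [hn'] at h
  · have hm1 : 1 ≤ m := by omega
    have h := odd_case m hm1
    have hn' : 2*m+1 = n := by omega
    rwa [hn'] at h
end

section
/- The point of [0,1] with binary expansion (0100100)^∞ is periodic of prime period 7 under the doubling map T, and its orbit is disjoint from the open interval (2/7, 32/63): every point of the orbit whose expansion starts with 0 is strictly less than 2/7 and every point whose expansion starts with 1 is strictly greater than 32/63. -/
lemma t36 : T ((36:ℝ)/127) = 72/127 := by unfold T; norm_num
lemma t72 : T ((72:ℝ)/127) = 17/127 := by unfold T; norm_num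
lemma t17 : T ((17:ℝ)/127) = 34/127 := by unfold T; norm_num
lemma t34 : T ((34:ℝ)/127) = 68/127 := by unfold T; norm_num
lemma t68 : T ((68:ℝ)/127) = 9/127 := by unfold T; norm_num
lemma t9 : T ((9:ℝ)/127) = 18/127 := by unfold T; norm_num
lemma t18 : T ((18:ℝ)/127) = 36/127 := by unfold T; norm_num

lemma orbit (i : ℕ) :
    T^[i] ((36:ℝ)/127) = 36/127 ∨ T^[i] ((36:ℝ)/127) = 72/127 ∨
    T^[i] ((36:ℝ)/127) = 17/127 ∨ T^[i] ((36:ℝ)/127) = 34/127 ∨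
    T^[i] ((36:ℝ)/127) = 68/127 ∨ T^[i] ((36:ℝ)/127) = 9/127 ∨
    T^[i] ((36:ℝ)/127) = 18/127 := by
  induction i with
  | zero => left; rfl
  | succ n ih =>
    rw [Function.iterate_succ_apply']
    rcases ih with h | h | h | h | h | h | h <;> rw [h] <;>
      simp [t36, t72, t17, t34, t68, t9, t18]

theorem stmt_10 :
    T^[7] ((36:ℝ)/127) = 36/127 ∧
    (∀ m : ℕ, 0 < m → m < 7 → T^[m] ((36:ℝ)/127) ≠ 36/127) ∧
    (∀ i : ℕ, T^[i] ((36:ℝ)/127) ∉ Set.Ioo (2/7 : ℝ) (32/63)) ∧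
    (∀ i : ℕ, (T^[i] ((36:ℝ)/127) < 1/2 → T^[i] ((36:ℝ)/127) < 2/7) ∧
      (1/2 < T^[i] ((36:ℝ)/127) → 32/63 < T^[i] ((36:ℝ)/127))) := by
  have i1 : T^[1] ((36:ℝ)/127) = 72/127 := by simp [t36]
  have i2 : T^[2] ((36:ℝ)/127) = 17/127 := by
    rw [show (2:ℕ) = 1+1 from rfl, Function.iterate_add_apply, i1]; simp [t72]
  have i3 : T^[3] ((36:ℝ)/127) = 34/127 := by
    rw [show (3:ℕ) = 1+2 from rfl, Function.iterate_add_apply, i2]; simp [t17]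
  have i4 : T^[4] ((36:ℝ)/127) = 68/127 := by
    rw [show (4:ℕ) = 1+3 from rfl, Function.iterate_add_apply, i3]; simp [t34]
  have i5 : T^[5] ((36:ℝ)/127) = 9/127 := by
    rw [show (5:ℕ) = 1+4 from rfl, Function.iterate_add_apply, i4]; simp [t68]
  have i6 : T^[6] ((36:ℝ)/127) = 18/127 := by
    rw [show (6:ℕ) = 1+5 from rfl, Function.iterate_add_apply, i5]; simp [t9]
  have i7 : T^[7] ((36:ℝ)/127) = 36/127 := by
    rw [show (7:ℕ) = 1+6 from rfl, Function.iterate_add_apply, i6]; simp [t18]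
  refine ⟨i7, ?_, ?_, ?_⟩
  · intro m hm hm7
    interval_cases m <;>
      norm_num [Function.iterate_succ_apply', t36, t72, t17, t34, t68, t9, t18]
  · intro i hi
    obtain ⟨h1, h2⟩ := hi
    rcases orbit i with h | h | h | h | h | h | h <;> rw [h] at h1 h2 <;> linarith
  · intro i
    rcases orbit i with h | h | h | h | h | h | h <;> rw [h] <;> norm_num
end

section
/- Let r1 = p1/q1 < r2 = p2/q2 ≤ 1/2 be Farey neighbours (p2 q1 - p1 q2 = 1) and r3 = (p1+p2)/(q1+q2) their mediant. Writing s_i = s(r_i) and t_i = t(r_i), one has s_3 = s_2 s_1 (concatenation of words). -/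
/-- `u` is a (contiguous) factor of `w`. -/
def IsFactor (u w : List Bool) : Prop := ∃ l r : List Bool, w = l ++ u ++ r

/-- A binary word is balanced: any two factors of equal length have numbers of
`true`s (ones) differing by at most 1. -/
def BalancedW (w : List Bool) : Prop :=
  ∀ u v : List Bool, IsFactor u w → IsFactor v w → u.length = v.length →
    (u.count true : ℤ) - (v.count true : ℤ) ≤ 1

/-- A word is cyclically balanced if all its cyclic rotations are balanced. -/
def CyclBalanced (w : List Bool) : Prop := ∀ k : ℕ, BalancedW (w.rotate k)

/-- Lexicographic `≤` on finite binary words (`false < true`). -/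
def WordLe (u v : List Bool) : Prop := u = v ∨ List.Lex (· < ·) u v

/-- `w = s(p/q)`: the lexicographically largest cyclically balanced word of
length `q` with `p` ones beginning with `0`. -/
def IsSWord (p q : ℕ) (w : List Bool) : Prop :=
  w.length = q ∧ w.count true = p ∧ CyclBalanced w ∧ w.head? = some false ∧
  ∀ w' : List Bool, w'.length = q → w'.count true = p → CyclBalanced w' →
    w'.head? = some false → WordLe w' w

/-- `w = t(p/q)`: the lexicographically smallest cyclically balanced word of
length `q` with `p` ones beginning with `1`. -/
def IsTWord (p q : ℕ) (w : List Bool) : Prop :=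
  w.length = q ∧ w.count true = p ∧ CyclBalanced w ∧ w.head? = some true ∧
  ∀ w' : List Bool, w'.length = q → w'.count true = p → CyclBalanced w' →
    w'.head? = some true → WordLe w w'

namespace SW

/-- counting function of the mechanical word -/
def Fh (p q c i : ℕ) : ℕ := (i * p + c) / q

/-- letter i of the mechanical word -/
def Bb (p q c i : ℕ) : Bool := decide (Fh p q c i < Fh p q c (i+1))

/-- segment of the mechanical word -/
def seg (p q c a n : ℕ) : List Bool := (List.range n).map (fun j => Bb p q c (a+j))

def Eword (p q : ℕ) : List Bool := seg p q (q - p - 1) 0 q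

lemma seg_length (p q c a n : ℕ) : (seg p q c a n).length = n := by
  simp [seg]

lemma seg_append (p q c a m n : ℕ) :
    seg p q c a (m + n) = seg p q c a m ++ seg p q c (a + m) n := by
  simp [seg, List.range_add, Function.comp, add_assoc, add_comm, add_left_comm]

lemma Fh_mono (p q c : ℕ) : Monotone (Fh p q c) := by
  intro i j hij
  exact Nat.div_le_div_right (by nlinarith)

lemma Fh_step_le (p q c i : ℕ) (hpq : p ≤ q) : Fh p q c (i+1) ≤ Fh p q c i + 1 := by
  rcases Nat.eq_zero_or_pos q with h | h
  · simp [Fh, h]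
  · unfold Fh
    have h2 : (i+1) * p + c ≤ (i * p + c) + q := by nlinarith
    calc ((i+1) * p + c) / q ≤ ((i*p + c) + q) / q := Nat.div_le_div_right h2
      _ = (i*p+c)/q + 1 := Nat.add_div_right _ h

lemma Fh_add_q (p q c i : ℕ) (hq : 0 < q) : Fh p q c (i + q) = Fh p q c i + p := by
  unfold Fh
  have : (i + q) * p + c = (i * p + c) + p * q := by ring
  rw [this, Nat.add_mul_div_right _ _ hq]

lemma Bb_add_q (p q c i : ℕ) (hq : 0 < q) : Bb p q c (i + q) = Bb p q c i := by
  unfold Bb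
  rw [show i + q + 1 = (i+1) + q by ring, Fh_add_q p q c i hq, Fh_add_q p q c (i+1) hq]
  simp

lemma seg_add_q (p q c a n : ℕ) (hq : 0 < q) : seg p q c (a + q) n = seg p q c a n := by
  unfold seg
  apply List.map_congr_left
  intro j _
  rw [show a + q + j = (a + j) + q by ring, Bb_add_q _ _ _ _ hq]

lemma count_seg (p q c a n : ℕ) (hpq : p ≤ q) :
    Fh p q c a + (seg p q c a n).count true = Fh p q c (a + n) := by
  induction n with
  | zero => simp [seg]
  | succ n ih =>
    rw [seg_append, List.count_append, show a + (n+1) = (a+n)+1 by ring]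
    have h1 : seg p q c (a+n) 1 = [Bb p q c (a+n)] := by
      simp [seg, List.range_succ]
    rw [h1]
    have hm : Fh p q c (a+n) ≤ Fh p q c ((a+n)+1) := Fh_mono p q c (by omega)
    have hs : Fh p q c ((a+n)+1) ≤ Fh p q c (a+n) + 1 := Fh_step_le p q c _ hpq
    by_cases h : Bb p q c (a+n)
    · have hlt : Fh p q c (a+n) < Fh p q c ((a+n)+1) := by
        have := h; unfold Bb at this; simpa using this
      have h2 : ([Bb p q c (a+n)].count true) = 1 := by rw [h]; simp
      rw [h2]
      omega
    · have hlt : ¬ (Fh p q c (a+n) < Fh p q c ((a+n)+1)) := by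
        have := h; unfold Bb at this; simpa using this
      have h2 : ([Bb p q c (a+n)].count true) = 0 := by
        simp [List.count_singleton']
        exact Bool.of_not_eq_true h
      rw [h2]
      omega


lemma seg_take (p q c a n k : ℕ) (hk : k ≤ n) :
    (seg p q c a n).take k = seg p q c a k := by
  have : n = k + (n - k) := by omega
  rw [this, seg_append, List.take_append_of_le_length (by simp [seg_length]),
    List.take_of_length_le (by simp [seg_length])]

lemma seg_drop (p q c a n k : ℕ) (hk : k ≤ n) :
    (seg p q c a n).drop k = seg p q c (a + k) (n - k) := by
  have : n = k + (n - k) := by omega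
  rw [this, seg_append]
  rw [List.drop_append_of_le_length (by simp [seg_length]),
    List.drop_of_length_le (by simp [seg_length]), List.nil_append]
  simp [seg_length]

lemma rotate_seg (p q c k : ℕ) (hq : 0 < q) (hk : k ≤ q) :
    (seg p q c 0 q).rotate k = seg p q c k q := by
  rw [List.rotate_eq_drop_append_take (by simp [seg_length]; omega)]
  rw [seg_take _ _ _ _ _ _ hk, seg_drop _ _ _ _ _ _ hk, Nat.zero_add]
  have h0 : seg p q c 0 k = seg p q c (k + (q - k)) k := by
    have := (seg_add_q p q c 0 k hq).symm
    rw [Nat.zero_add] at this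
    rw [this]
    congr 1
    omega
  rw [h0, ← seg_append]
  congr 1
  omega

lemma factor_seg (p q c a n : ℕ) (u : List Bool) (h : IsFactor u (seg p q c a n)) :
    ∃ x m, m = u.length ∧ a ≤ x ∧ x + m ≤ a + n ∧ u = seg p q c x m := by
  obtain ⟨l, r, hw⟩ := h
  have hlen : l.length + (u.length + r.length) = n := by
    have := congrArg List.length hw
    simpa [seg_length] using this.symm
  refine ⟨a + l.length, u.length, rfl, by omega, by omega, ?_⟩
  have h1 : (seg p q c a n).drop l.length = u ++ r := by rw [hw]; simp
  have h2 : ((seg p q c a n).drop l.length).take u.length = u := by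
    rw [h1, List.take_append_of_le_length (le_refl _), List.take_of_length_le (le_refl _)]
  rw [seg_drop _ _ _ _ _ _ (by omega), seg_take _ _ _ _ _ _ (by omega)] at h2
  exact h2.symm

-- division inequalities
lemma div_add_div_le (A B q : ℕ) : A / q + B / q ≤ (A + B) / q := by
  rcases Nat.eq_zero_or_pos q with h | h
  · simp [h]
  · rw [Nat.le_div_iff_mul_le h, Nat.add_mul, ]
    have h1 := Nat.div_mul_le_self A q
    have h2 := Nat.div_mul_le_self B q
    omega

lemma div_add_le_div_add_div_add_one (A B q : ℕ) : (A + B) / q ≤ A / q + B / q + 1 := by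
  rcases Nat.eq_zero_or_pos q with h | h
  · simp [h]
  · have h1 := Nat.div_add_mod A q
    have h2 := Nat.div_add_mod B q
    have h3 : A % q < q := Nat.mod_lt _ h
    have h4 : B % q < q := Nat.mod_lt _ h
    have h1' : A / q * q + A % q = A := Nat.div_add_mod' A q
    have h2' : B / q * q + B % q = B := Nat.div_add_mod' B q
    have h5 : A + B < (A/q + B/q + 2) * q := by
      rw [Nat.add_mul, Nat.add_mul]
      omega
    have := (Nat.div_lt_iff_lt_mul h).2 h5
    omega

lemma count_window (p q c x m : ℕ) (hpq : p ≤ q) :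
    ((seg p q c x m).count true : ℤ) = (Fh p q c (x + m) : ℤ) - Fh p q c x := by
  have := count_seg p q c x m hpq
  omega

lemma window_diff (p q c x y m : ℕ) (hpq : p ≤ q) :
    ((seg p q c x m).count true : ℤ) - (seg p q c y m).count true ≤ 1 := by
  rw [count_window _ _ _ _ _ hpq, count_window _ _ _ _ _ hpq]
  have hx : Fh p q c (x + m) ≤ Fh p q c x + (m * p) / q + 1 := by
    unfold Fh
    calc ((x+m)*p + c) / q = ((x * p + c) + m * p) / q := by ring_nf
      _ ≤ (x*p+c)/q + (m*p)/q + 1 := div_add_le_div_add_div_add_one _ _ _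
  have hy : Fh p q c y + (m * p) / q ≤ Fh p q c (y + m) := by
    unfold Fh
    calc (y*p+c)/q + (m*p)/q ≤ ((y * p + c) + m * p) / q := div_add_div_le _ _ _
      _ = ((y+m)*p + c) / q := by ring_nf
  omega

lemma balanced_seg (p q c a : ℕ) (hpq : p ≤ q) : BalancedW (seg p q c a q) := by
  intro u v hu hv hlen
  obtain ⟨x, m, hm, _, _, hux⟩ := factor_seg _ _ _ _ _ _ hu
  obtain ⟨y, m', hm', _, _, hvy⟩ := factor_seg _ _ _ _ _ _ hv
  have heq : m' = m := by omega
  rw [heq] at hvy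
  rw [hux, hvy]
  exact window_diff p q c x y m hpq

lemma cyclBalanced_Eword (p q : ℕ) (hq : 0 < q) (hpq : p ≤ q) :
    CyclBalanced (Eword p q) := by
  intro k
  unfold Eword
  have hlen : (seg p q (q-p-1) 0 q).length = q := seg_length _ _ _ _ _
  rw [← List.rotate_mod, hlen, rotate_seg p q _ (k % q) hq (le_of_lt (Nat.mod_lt _ hq))]
  exact balanced_seg p q _ _ hpq

lemma length_Eword (p q : ℕ) : (Eword p q).length = q := seg_length _ _ _ _ _

lemma Fh_zero (p q c : ℕ) (hc : c < q) : Fh p q c 0 = 0 := by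
  unfold Fh
  simp [Nat.div_eq_of_lt hc]

lemma count_Eword (p q : ℕ) (hq : 0 < q) (hpq : p < q) : (Eword p q).count true = p := by
  have h := count_seg p q (q - p - 1) 0 q (le_of_lt hpq)
  rw [Fh_zero _ _ _ (by omega)] at h
  have hFq : Fh p q (q-p-1) (0 + q) = p := by
    unfold Fh
    rw [show (0 + q) * p + (q - p - 1) = q * p + (q - p - 1) by ring_nf]
    rw [Nat.mul_add_div hq]
    rw [Nat.div_eq_of_lt (show q - p - 1 < q by omega)]
    omega
  rw [hFq] at h
  unfold Eword
  omega

lemma Fh_one (p q : ℕ) (hpq : p < q) : Fh p q (q - p - 1) 1 = 0 := by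
  unfold Fh
  rw [show 1 * p + (q - p - 1) = q - 1 by omega]
  exact Nat.div_eq_of_lt (by omega)

lemma head_Eword (p q : ℕ) (hq : 0 < q) (hpq : p < q) : (Eword p q).head? = some false := by
  unfold Eword
  have h2 : seg p q (q-p-1) 0 q = seg p q (q-p-1) 0 (1 + (q-1)) := by congr 1; omega
  rw [h2, seg_append]
  have h1 : seg p q (q-p-1) 0 1 = [Bb p q (q-p-1) 0] := by simp [seg, List.range_succ]
  rw [h1]
  simp only [List.cons_append, List.head?_cons]
  congr 1
  unfold Bb
  rw [Fh_zero _ _ _ (by omega), show (0:ℕ)+1 = 1 by rfl, Fh_one p q hpq]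
  simp


/-! ### cyclic window counts for an arbitrary word -/

def cnt (w : List Bool) (a n : ℕ) : ℕ := ((w.rotate a).take n).count true

lemma cnt_mod (w : List Bool) (a n : ℕ) : cnt w (a % w.length) n = cnt w a n := by
  unfold cnt
  rw [List.rotate_mod]

lemma cnt_add_len (w : List Bool) (a n : ℕ) : cnt w (a + w.length) n = cnt w a n := by
  rw [← cnt_mod w (a + w.length), Nat.add_mod_right, cnt_mod]

lemma take_rotate (l : List Bool) (m k : ℕ) (h : m + k ≤ l.length) :
    (l.rotate m).take k = (l.drop m).take k := by
  rw [List.rotate_eq_drop_append_take (by omega)]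
  exact List.take_append_of_le_length (by rw [List.length_drop]; omega)

lemma cnt_additive (w : List Bool) (a m k : ℕ) (h : m + k ≤ w.length) :
    cnt w a (m + k) = cnt w a m + cnt w (a + m) k := by
  unfold cnt
  rw [List.take_add, List.count_append]
  congr 1
  rw [← List.rotate_rotate]
  rw [take_rotate _ _ _ (by rw [List.length_rotate]; omega)]

lemma cnt_full (w : List Bool) (a : ℕ) : cnt w a w.length = w.count true := by
  unfold cnt
  rw [List.take_of_length_le (by rw [List.length_rotate])]
  exact (List.rotate_perm w a).count_eq true

lemma cnt_block (w : List Bool) : ∀ k, k ≤ w.length → ∀ b,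
    cnt w b k = ∑ j ∈ Finset.range k, cnt w (b + j) 1 := by
  intro k
  induction k with
  | zero => intro _ b; simp [cnt]
  | succ k ih =>
    intro hk b
    rw [cnt_additive w b k 1 (by omega), ih (by omega) b, Finset.sum_range_succ]

lemma sum_cnt (w : List Bool) : ∀ n, n ≤ w.length →
    ∑ a ∈ Finset.range w.length, cnt w a n = n * w.count true := by
  intro n
  induction n with
  | zero => simp [cnt]
  | succ n ih =>
    intro hn
    have h1 : ∀ a, cnt w a (n + 1) = cnt w a n + cnt w (a + n) 1 :=
      fun a => cnt_additive w a n 1 (by omega)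
    simp only [h1]
    rw [Finset.sum_add_distrib, ih (by omega)]
    have h2 : ∑ a ∈ Finset.range w.length, cnt w (a + n) 1
        = ∑ a ∈ Finset.range w.length, cnt w (n + a) 1 := by
      apply Finset.sum_congr rfl
      intro a _
      rw [Nat.add_comm]
    rw [h2, ← cnt_block w w.length (le_refl _) n, cnt_full]
    ring

lemma factor_of_take_drop (l : List Bool) (d n : ℕ) :
    IsFactor ((l.drop d).take n) l := by
  refine ⟨l.take d, (l.drop d).drop n, ?_⟩
  rw [List.append_assoc, List.take_append_drop, List.take_append_drop]

lemma cnt_pair (w : List Bool) (hcb : CyclBalanced w) :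
    ∀ n, n ≤ w.length → ∀ a b, cnt w a n ≤ cnt w b n + 1 := by
  intro n
  induction n using Nat.strong_induction_on with
  | _ n IH =>
    intro hn a b
    rcases Nat.eq_zero_or_pos n with hn0 | hn0
    · subst hn0; simp [cnt]
    have hq : 0 < w.length := by omega
    rw [← cnt_mod w a, ← cnt_mod w b]
    obtain ⟨a', ha2, ha3⟩ : ∃ a', a % w.length = a' ∧ a' < w.length :=
      ⟨a % w.length, rfl, Nat.mod_lt _ hq⟩
    obtain ⟨b', hb2, hb3'⟩ : ∃ b', b % w.length = b' ∧ b' < w.length :=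
      ⟨b % w.length, rfl, Nat.mod_lt _ hq⟩
    rw [ha2, hb2]
    clear ha2 hb2
    obtain ⟨d, hd2, hcase⟩ : ∃ d, d < w.length ∧ (b' = a' + d ∨ b' + w.length = a' + d) := by
      rcases le_or_gt a' b' with h | h
      · exact ⟨b' - a', by omega, Or.inl (by omega)⟩
      · exact ⟨b' + w.length - a', by omega, Or.inr (by omega)⟩
    have hb3 : cnt w b' n = cnt w (a' + d) n := by
      rcases hcase with h | h
      · rw [h]
      · rw [← h, cnt_add_len]
    rw [hb3]
    rcases Nat.eq_zero_or_pos d with hd0 | hd0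
    · have heq0 : cnt w (a' + d) n = cnt w a' n := by rw [hd0]; rfl
      omega
    by_cases hc1 : d + n ≤ w.length
    · -- both windows inside rotate a'
      have hv : cnt w (a' + d) n = (((w.rotate a').drop d).take n).count true := by
        unfold cnt
        rw [← List.rotate_rotate, take_rotate _ _ _ (by rw [List.length_rotate]; omega)]
      have hfu : IsFactor ((w.rotate a').take n) (w.rotate a') := by
        refine ⟨[], (w.rotate a').drop n, ?_⟩
        rw [List.nil_append, List.take_append_drop]
      have hfv : IsFactor (((w.rotate a').drop d).take n) (w.rotate a') :=
        factor_of_take_drop _ d n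
      have hlen : ((w.rotate a').take n).length = (((w.rotate a').drop d).take n).length := by
        rw [List.length_take, List.length_take, List.length_drop, List.length_rotate]
        omega
      have hb := hcb a' _ _ hfu hfv hlen
      have hu : cnt w a' n = ((w.rotate a').take n).count true := rfl
      omega
    by_cases hc2 : n ≤ d
    · -- both windows inside rotate b'
      have hae : a' + w.length = b' + (w.length - d) ∨ a' = b' + (w.length - d) := by
        rcases hcase with h | h
        · left; omega
        · right; omega
      have hcnta : cnt w a' n = cnt w (b' + (w.length - d)) n := by
        rcases hae with h | h
        · rw [← h, cnt_add_len]
        · rw [h]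
      have hrot : w.rotate (a' + d) = w.rotate b' := by
        rcases hcase with h | h
        · rw [h]
        · rw [← List.rotate_mod w (a' + d), ← h, Nat.add_comm b', Nat.add_mod_left,
            List.rotate_mod]
      have hv : cnt w (b' + (w.length - d)) n
          = (((w.rotate b').drop (w.length - d)).take n).count true := by
        unfold cnt
        rw [← List.rotate_rotate, take_rotate _ _ _ (by rw [List.length_rotate]; omega)]
      have hfv : IsFactor (((w.rotate b').drop (w.length - d)).take n) (w.rotate b') :=
        factor_of_take_drop _ _ n
      have hfu : IsFactor ((w.rotate b').take n) (w.rotate b') := by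
        refine ⟨[], (w.rotate b').drop n, ?_⟩
        rw [List.nil_append, List.take_append_drop]
      have hlen : (((w.rotate b').drop (w.length - d)).take n).length
          = ((w.rotate b').take n).length := by
        rw [List.length_take, List.length_take, List.length_drop, List.length_rotate]
        omega
      have hb := hcb b' _ _ hfv hfu hlen
      have hu : cnt w (a' + d) n = ((w.rotate b').take n).count true := by
        unfold cnt; rw [hrot]
      omega
    · -- Euclid step
      have hdn : d < n := by omega
      have e1 : cnt w a' n = cnt w a' d + cnt w (a' + d) (n - d) := by
        have := cnt_additive w a' d (n - d) (by omega)
        rw [show d + (n - d) = n by omega] at this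
        exact this
      have e2 : cnt w (a' + d) n = cnt w (a' + d) (n - d) + cnt w (a' + n) d := by
        have := cnt_additive w (a' + d) (n - d) d (by omega)
        rw [show (n - d) + d = n by omega, show a' + d + (n - d) = a' + n by omega] at this
        exact this
      have e3 := IH d hdn (by omega) a' (a' + n)
      omega


lemma cnt_bound (w : List Bool) (hcb : CyclBalanced w) (hq : 0 < w.length)
    (n : ℕ) (hn : n ≤ w.length) (a : ℕ) :
    w.length * cnt w a n + 1 ≤ n * w.count true + w.length := by
  have hmem : a % w.length ∈ Finset.range w.length := by
    simp [Nat.mod_lt _ hq]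
  have hsum := sum_cnt w n hn
  rw [← Finset.add_sum_erase _ _ hmem] at hsum
  have hge : ∀ b ∈ (Finset.range w.length).erase (a % w.length),
      cnt w a n - 1 ≤ cnt w b n := by
    intro b _
    have := cnt_pair w hcb n hn a b
    omega
  have hcard : ((Finset.range w.length).erase (a % w.length)).card = w.length - 1 := by
    rw [Finset.card_erase_of_mem hmem, Finset.card_range]
  have hsl := Finset.card_nsmul_le_sum ((Finset.range w.length).erase (a % w.length))
      _ _ hge
  rw [hcard, smul_eq_mul] at hsl
  rw [cnt_mod] at hsum
  have hkey : (w.length - 1) * (cnt w a n - 1) + (cnt w a n) ≤ n * w.count true := by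
    omega
  have hexp : w.length * cnt w a n ≤ (w.length - 1) * (cnt w a n - 1) + (cnt w a n) + (w.length - 1) := by
    rcases Nat.eq_zero_or_pos (cnt w a n) with h0 | h0
    · rw [h0]; omega
    · have e1 : w.length = (w.length - 1) + 1 := by omega
      have e2 : cnt w a n = (cnt w a n - 1) + 1 := by omega
      calc w.length * cnt w a n = ((w.length - 1) + 1) * ((cnt w a n - 1) + 1) := by
            rw [← e1, ← e2]
        _ = (w.length - 1) * (cnt w a n - 1) + (cnt w a n - 1) + (w.length - 1) + 1 := by ring
        _ ≤ (w.length - 1) * (cnt w a n - 1) + (cnt w a n) + (w.length - 1) := by omega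
  omega

/-! ### lexicographic facts -/

lemma lex_decomp : ∀ {u v : List Bool}, List.Lex (· < ·) u v → u.length = v.length →
    ∃ l u' v', u = l ++ false :: u' ∧ v = l ++ true :: v' := by
  intro u v h
  induction h with
  | nil => intro h; simp at h
  | @rel a l₁ b l₂ hab =>
    intro _
    refine ⟨[], l₁, l₂, ?_, ?_⟩ <;> simp
    · exact (Bool.lt_iff.mp hab).1
    · exact (Bool.lt_iff.mp hab).2
  | @cons a l₁ l₂ h ih =>
    intro hlen
    obtain ⟨l, u', v', h1, h2⟩ := ih (by simpa using hlen)
    exact ⟨a :: l, u', v', by simp [h1], by simp [h2]⟩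

lemma lex_total : ∀ (u v : List Bool), u.length = v.length →
    u = v ∨ List.Lex (· < ·) u v ∨ List.Lex (· < ·) v u := by
  intro u
  induction u with
  | nil =>
    intro v hv
    left
    symm
    exact List.length_eq_zero_iff.mp (by simp at hv; omega)
  | cons a u ih =>
    intro v hv
    rcases v with _ | ⟨b, v⟩
    · simp at hv
    rcases ih v (by simpa using hv) with h | h | h
    · subst h
      by_cases hab : a = b
      · subst hab; left; rfl
      · rcases a <;> rcases b
        · simp at hab
        · right; left; exact List.Lex.rel (by decide)
        · right; right; exact List.Lex.rel (by decide)
        · simp at hab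
    · by_cases hab : a = b
      · subst hab; right; left; exact List.Lex.cons h
      · rcases a <;> rcases b
        · simp at hab
        · right; left; exact List.Lex.rel (by decide)
        · right; right; exact List.Lex.rel (by decide)
        · simp at hab
    · by_cases hab : a = b
      · subst hab; right; right; exact List.Lex.cons h
      · rcases a <;> rcases b
        · simp at hab
        · right; left; exact List.Lex.rel (by decide)
        · right; right; exact List.Lex.rel (by decide)
        · simp at hab

lemma lex_asymm : ∀ {u v : List Bool}, List.Lex (· < ·) u v → List.Lex (· < ·) v u → False := by
  intro u v h
  induction h with
  | nil => intro h; cases h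
  | @rel a l₁ b l₂ hab =>
    intro h2
    cases h2 with
    | rel hba => exact absurd hba (lt_asymm hab)
    | cons h => exact absurd hab (lt_irrefl _)
  | @cons a l₁ l₂ h ih =>
    intro h2
    cases h2 with
    | rel hba => exact absurd hba (lt_irrefl _)
    | cons h => exact ih h

lemma wordle_antisymm {u v : List Bool} (h1 : WordLe u v) (h2 : WordLe v u) : u = v := by
  rcases h1 with h1 | h1
  · exact h1
  rcases h2 with h2 | h2
  · exact h2.symm
  exact absurd h2 (fun h => lex_asymm h1 h)


lemma take_one_head (w : List Bool) (b : Bool) (h : w.head? = some b) :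
    w.take 1 = [b] := by
  cases w with
  | nil => simp at h
  | cons a t => simp at h; simp [h]

lemma sword_max (p q : ℕ) (hpq : p < q) (w : List Bool)
    (hl : w.length = q) (hc : w.count true = p) (hcb : CyclBalanced w)
    (hh : w.head? = some false) : WordLe w (Eword p q) := by
  have hq : 0 < q := by omega
  have hlE : (Eword p q).length = q := length_Eword p q
  rcases lex_total w (Eword p q) (by omega) with h | h | h
  · exact Or.inl h
  · exact Or.inr h
  exfalso
  obtain ⟨l, u', v', hE, hw⟩ := lex_decomp h (by omega)
  set c := q - p - 1 with hcdef
  set k := l.length with hk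
  have hk1 : k + 1 ≤ q := by
    have := congrArg List.length hw
    simp at this
    omega
  -- count of prefix of w
  have hwtake : w.take (k + 1) = l ++ [true] := by
    rw [hw, show l ++ true :: v' = (l ++ [true]) ++ v' by simp]
    exact List.take_left' (by simp [hk])
  have hcw : cnt w 0 (k + 1) = l.count true + 1 := by
    unfold cnt
    rw [List.rotate_zero, hwtake]
    simp
  -- w starts with false
  have hcnt1 : cnt w 0 1 = 0 := by
    unfold cnt
    rw [List.rotate_zero, take_one_head w false hh]
    simp
  have hsplit : cnt w 0 (1 + k) = cnt w 0 1 + cnt w (0 + 1) k :=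
    cnt_additive w 0 1 k (by omega)
  rw [show (1 : ℕ) + k = k + 1 by omega, hcw, hcnt1] at hsplit
  have hcnt1k : cnt w 1 k = l.count true + 1 := by
    rw [show (0 : ℕ) + 1 = 1 by rfl] at hsplit
    omega
  -- window bound
  have hbd := cnt_bound w hcb (by omega) k (by omega) 1
  rw [hcnt1k, hl, hc] at hbd
  -- E side: l.count = Fh k
  have hEtake : (Eword p q).take k = l := by
    rw [hE]
    exact List.take_left' rfl
  have hEl : Fh p q c k = l.count true := by
    have h1 : (Eword p q).take k = seg p q c 0 k := seg_take p q c 0 q k (by omega)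
    have h2 := count_seg p q c 0 k (by omega)
    rw [Fh_zero p q c (by omega), Nat.zero_add, Nat.zero_add] at h2
    rw [← h2, ← h1, hEtake]
  -- E letter at k is false
  have hEdrop : (Eword p q).drop k = false :: u' := by
    rw [hE]
    exact List.drop_left' rfl
  have hBbk : Bb p q c k = false := by
    have h1 : (Eword p q).drop k = seg p q c (0 + k) (q - k) :=
      seg_drop p q c 0 q k (by omega)
    rw [Nat.zero_add] at h1
    have h2 : seg p q c k (q - k) = seg p q c k (1 + (q - k - 1)) := by
      congr 1
      omega
    rw [h2, seg_append] at h1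
    have h3 : seg p q c k 1 = [Bb p q c k] := by simp [seg, List.range_succ]
    rw [h3, hEdrop, List.singleton_append] at h1
    exact (List.cons_eq_cons.mp h1).1.symm
  have hFk1 : Fh p q c (k + 1) = Fh p q c k := by
    have hmono : Fh p q c k ≤ Fh p q c (k + 1) := Fh_mono p q c (by omega)
    have := hBbk
    unfold Bb at this
    simp at this
    omega
  -- key arithmetic: q * Fh (k+1) ≥ k * p
  have hkey : k * p ≤ q * Fh p q c (k + 1) := by
    unfold Fh
    have harg : (k + 1) * p + c = k * p + (q - 1) := by
      rw [hcdef]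
      have : (k+1) * p = k * p + p := by ring
      omega
    rw [harg]
    have hdm := Nat.div_add_mod (k * p + (q - 1)) q
    have hml : (k * p + (q - 1)) % q < q := Nat.mod_lt _ hq
    omega
  rw [hFk1, hEl] at hkey
  have hexp : q * (l.count true + 1) = q * l.count true + q := by ring
  omega


/-! ### Farey arithmetic -/

section Farey

variable (p1 q1 p2 q2 : ℕ)

lemma Fh_left (h1 : 0 < p1) (h1q : p1 < q1) (h2 : 0 < p2) (h2q : p2 < q2)
    (hfarey : (p2 : ℤ) * q1 - (p1 : ℤ) * q2 = 1) :
    ∀ i ≤ q2, Fh (p1+p2) (q1+q2) ((q1+q2) - (p1+p2) - 1) i = Fh p2 q2 (q2 - p2 - 1) i := by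
  intro i hi
  set M := i * p2 + (q2 - p2 - 1) with hM
  set N := i * (p1+p2) + ((q1+q2) - (p1+p2) - 1) with hN
  set a := M / q2 with ha
  set r := M % q2 with hr
  have hq2 : 0 < q2 := by omega
  have hq3 : 0 < q1 + q2 := by omega
  have hdm : q2 * a + r = M := Nat.div_add_mod M q2
  have hrlt : r < q2 := Nat.mod_lt _ hq2
  have hMZ : (M : ℤ) = i * p2 + ((q2 : ℤ) - p2 - 1) := by
    rw [hM]; push_cast; omega
  have hid : (N : ℤ) * q2 = (M : ℤ) * (q1 + q2) + ((q1 : ℤ) + 1 - i) := by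
    have hNZ : (N : ℤ) = i * (p1 + p2) + ((q1 : ℤ) + q2 - (p1 + p2) - 1) := by
      rw [hN]; push_cast; omega
    rw [hMZ, hNZ]
    linear_combination ((1 : ℤ) - i) * hfarey
  have hr0 : r = 0 → i ≤ q1 + 1 := by
    intro h0
    by_contra hcon
    push_neg at hcon
    have hdvd : (q2 : ℤ) ∣ M := by
      have : (M : ℤ) = q2 * a := by
        have := hdm
        omega
      exact ⟨a, this⟩
    obtain ⟨t, ht⟩ := hdvd
    have hkey : (i : ℤ) - 1 - q1 = q2 * (q1 * t - (i * p1 + q1 - p1)) := by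
      linear_combination (q1 : ℤ) * ht - ((i : ℤ) - 1) * hfarey - (q1 : ℤ) * hMZ
    have hpos : (0 : ℤ) < (i : ℤ) - 1 - q1 := by
      have : (q1 : ℤ) + 2 ≤ i := by exact_mod_cast hcon
      omega
    have hle := Int.le_of_dvd hpos ⟨q1 * t - (i * p1 + q1 - p1), hkey⟩
    have : (i : ℤ) ≤ q2 := by exact_mod_cast hi
    omega
  -- lower bound
  have hlowZ : (a : ℤ) * (q1 + q2) * q2 ≤ (N : ℤ) * q2 := by
    have hM2 : (M : ℤ) = q2 * a + r := by exact_mod_cast hdm.symm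
    rw [hid, hM2]
    have hnn : (0 : ℤ) ≤ (r : ℤ) * (q1 + q2) + q1 + 1 - i := by
      rcases Nat.eq_zero_or_pos r with h0 | h0
      · have := hr0 h0
        have : (i : ℤ) ≤ q1 + 1 := by exact_mod_cast this
        have : ((r : ℕ) : ℤ) = 0 := by exact_mod_cast h0
        simp [this]
        omega
      · have h1' : (1 : ℤ) ≤ r := by exact_mod_cast h0
        have hiq : (i : ℤ) ≤ q2 := by exact_mod_cast hi
        nlinarith
    nlinarith
  have hlow : a * (q1 + q2) ≤ N := by
    have := le_of_mul_le_mul_right (by linarith [hlowZ] : (a : ℤ) * (q1+q2) * q2 ≤ (N:ℤ) * q2) (by exact_mod_cast hq2 : (0:ℤ) < q2)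
    exact_mod_cast this
  -- upper bound
  have huppZ : (N : ℤ) * q2 < ((a : ℤ) + 1) * (q1 + q2) * q2 := by
    have hM2 : (M : ℤ) = q2 * a + r := by exact_mod_cast hdm.symm
    rw [hid, hM2]
    have hrle : (r : ℤ) ≤ q2 - 1 := by
      have : (r : ℤ) < q2 := by exact_mod_cast hrlt
      omega
    have hq2' : (2 : ℤ) ≤ q2 := by exact_mod_cast (by omega : 2 ≤ q2)
    have hq1' : (1 : ℤ) ≤ q1 := by exact_mod_cast (by omega : 1 ≤ q1)
    have hi0 : (0 : ℤ) ≤ i := by positivity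
    nlinarith
  have hupp : N < (a + 1) * (q1 + q2) := by
    have := lt_of_mul_lt_mul_right (by linarith [huppZ] : (N:ℤ) * q2 < ((a:ℤ)+1) * (q1+q2) * q2) (by positivity : (0:ℤ) ≤ (q2:ℤ))
    exact_mod_cast this
  show N / (q1 + q2) = a
  have h1' : a ≤ N / (q1+q2) := (Nat.le_div_iff_mul_le hq3).mpr hlow
  have h2' : N / (q1+q2) < a + 1 := (Nat.div_lt_iff_lt_mul hq3).mpr hupp
  omega

lemma Fh_right (h1 : 0 < p1) (h1q : p1 < q1) (h2 : 0 < p2) (h2q : p2 < q2)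
    (hfarey : (p2 : ℤ) * q1 - (p1 : ℤ) * q2 = 1) :
    ∀ j ≤ q1, Fh (p1+p2) (q1+q2) ((q1+q2) - (p1+p2) - 1) (q2 + j)
      = p2 + Fh p1 q1 (q1 - p1 - 1) j := by
  intro j hj
  set M := j * p1 + (q1 - p1 - 1) with hM
  set N := (q2 + j) * (p1+p2) + ((q1+q2) - (p1+p2) - 1) with hN
  set a := M / q1 with ha
  set r := M % q1 with hr
  have hq1 : 0 < q1 := by omega
  have hq3 : 0 < q1 + q2 := by omega
  have hdm : q1 * a + r = M := Nat.div_add_mod M q1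
  have hrlt : r < q1 := Nat.mod_lt _ hq1
  have hMZ : (M : ℤ) = j * p1 + ((q1 : ℤ) - p1 - 1) := by
    rw [hM]; push_cast; omega
  have hid : (N : ℤ) * q1 = (M : ℤ) * (q1 + q2) + (p2 : ℤ) * (q1 + q2) * q1
      + ((j : ℤ) + q2 - q1 - 1) := by
    have hNZ : (N : ℤ) = (q2 + j) * (p1 + p2) + ((q1 : ℤ) + q2 - (p1 + p2) - 1) := by
      rw [hN]; push_cast; omega
    rw [hMZ, hNZ]
    linear_combination ((j : ℤ) - 1 - q1) * hfarey
  have hr0 : r = 0 → (q1 : ℤ) ≤ (j : ℤ) + q2 - 1 := by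
    intro h0
    have hdvd : (q1 : ℤ) ∣ M := by
      have : (M : ℤ) = q1 * a := by
        have := hdm
        omega
      exact ⟨a, this⟩
    obtain ⟨t, ht⟩ := hdvd
    have hkey : (j : ℤ) + q2 - 1 = q1 * ((j * p2 + q2 - p2) - q2 * t) := by
      linear_combination (-(q2 : ℤ)) * ht + (-(j : ℤ) + 1) * hfarey + (q2 : ℤ) * hMZ
    have hpos : (0 : ℤ) < (j : ℤ) + q2 - 1 := by
      have : (2 : ℤ) ≤ q2 := by exact_mod_cast (by omega : 2 ≤ q2)
      omega
    have hle := Int.le_of_dvd hpos ⟨(j * p2 + q2 - p2) - q2 * t, hkey⟩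
    omega
  have hM2 : (M : ℤ) = q1 * a + r := by exact_mod_cast hdm.symm
  have hjZ : (j : ℤ) ≤ q1 := by exact_mod_cast hj
  have hq2' : (2 : ℤ) ≤ q2 := by exact_mod_cast (by omega : 2 ≤ q2)
  have hq1' : (2 : ℤ) ≤ q1 := by exact_mod_cast (by omega : 2 ≤ q1)
  have hlowZ : ((p2 : ℤ) + a) * (q1 + q2) * q1 ≤ (N : ℤ) * q1 := by
    rw [hid, hM2]
    have hnn : (0 : ℤ) ≤ (r : ℤ) * (q1 + q2) + ((j : ℤ) + q2 - q1 - 1) := by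
      rcases Nat.eq_zero_or_pos r with h0 | h0
      · have := hr0 h0
        have hr' : ((r : ℕ) : ℤ) = 0 := by exact_mod_cast h0
        rw [hr']
        omega
      · have h1' : (1 : ℤ) ≤ r := by exact_mod_cast h0
        nlinarith
    nlinarith
  have huppZ : (N : ℤ) * q1 < ((p2 : ℤ) + a + 1) * (q1 + q2) * q1 := by
    rw [hid, hM2]
    have hrle : (r : ℤ) ≤ q1 - 1 := by
      have : (r : ℤ) < q1 := by exact_mod_cast hrlt
      omega
    nlinarith
  have hlow : (p2 + a) * (q1 + q2) ≤ N := by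
    have h' : ((p2 + a : ℕ) : ℤ) * (q1 + q2) * q1 ≤ (N : ℤ) * q1 := by push_cast; push_cast at hlowZ; linarith
    have := le_of_mul_le_mul_right h' (by exact_mod_cast hq1 : (0:ℤ) < q1)
    exact_mod_cast this
  have hupp : N < (p2 + a + 1) * (q1 + q2) := by
    have h' : (N : ℤ) * q1 < ((p2 + a + 1 : ℕ) : ℤ) * (q1 + q2) * q1 := by push_cast; push_cast at huppZ; linarith
    have := lt_of_mul_lt_mul_right h' (by positivity : (0:ℤ) ≤ (q1:ℤ))
    exact_mod_cast this
  show N / (q1 + q2) = p2 + a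
  have h1' : p2 + a ≤ N / (q1+q2) := (Nat.le_div_iff_mul_le hq3).mpr hlow
  have h2' : N / (q1+q2) < p2 + a + 1 := (Nat.div_lt_iff_lt_mul hq3).mpr hupp
  omega

end Farey


lemma Eword_concat (p1 q1 p2 q2 : ℕ) (h1 : 0 < p1) (h1q : p1 < q1) (h2 : 0 < p2)
    (h2q : p2 < q2) (hfarey : (p2 : ℤ) * q1 - (p1 : ℤ) * q2 = 1) :
    Eword (p1+p2) (q1+q2) = Eword p2 q2 ++ Eword p1 q1 := by
  unfold Eword
  have hswap : seg (p1+p2) (q1+q2) ((q1+q2) - (p1+p2) - 1) 0 (q1+q2)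
      = seg (p1+p2) (q1+q2) ((q1+q2) - (p1+p2) - 1) 0 (q2+q1) := by
    congr 1
    omega
  rw [hswap, seg_append, Nat.zero_add]
  congr 1
  · unfold seg
    apply List.map_congr_left
    intro i hi
    rw [List.mem_range] at hi
    rw [Nat.zero_add]
    unfold Bb
    rw [Fh_left p1 q1 p2 q2 h1 h1q h2 h2q hfarey i (by omega),
      Fh_left p1 q1 p2 q2 h1 h1q h2 h2q hfarey (i+1) (by omega)]
  · unfold seg
    apply List.map_congr_left
    intro j hj
    rw [List.mem_range] at hj
    unfold Bb
    rw [show q2 + j + 1 = q2 + (j + 1) by omega]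
    rw [Fh_right p1 q1 p2 q2 h1 h1q h2 h2q hfarey j (by omega),
      Fh_right p1 q1 p2 q2 h1 h1q h2 h2q hfarey (j+1) (by omega)]
    rw [Nat.zero_add]
    apply decide_eq_decide.mpr
    constructor <;> omega

end SW

theorem stmt_12 (p1 q1 p2 q2 : ℕ)
    (h1 : 0 < p1) (h1q : p1 < q1) (h2 : 0 < p2) (h2q : p2 < q2)
    (hfarey : (p2 : ℤ) * q1 - (p1 : ℤ) * q2 = 1)
    (hord : (p1 : ℚ) / q1 < (p2 : ℚ) / q2) (hhalf : (p2 : ℚ) / q2 ≤ 1/2)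
    (s1 s2 s3 : List Bool)
    (hs1 : IsSWord p1 q1 s1) (hs2 : IsSWord p2 q2 s2)
    (hs3 : IsSWord (p1 + p2) (q1 + q2) s3) :
    s3 = s2 ++ s1 := by
  have key : ∀ p q : ℕ, 0 < p → p < q → ∀ s : List Bool, IsSWord p q s →
      s = SW.Eword p q := by
    intro p q hp hpq s hs
    obtain ⟨hl, hc, hcb, hh, hmax⟩ := hs
    exact SW.wordle_antisymm
      (SW.sword_max p q hpq s hl hc hcb hh)
      (hmax _ (SW.length_Eword _ _) (SW.count_Eword _ _ (by omega) hpq)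
        (SW.cyclBalanced_Eword _ _ (by omega) (le_of_lt hpq))
        (SW.head_Eword _ _ (by omega) hpq))
  rw [key p1 q1 h1 h1q s1 hs1, key p2 q2 h2 h2q s2 hs2,
    key (p1+p2) (q1+q2) (by omega) (by omega) s3 hs3]
  exact SW.Eword_concat p1 q1 p2 q2 h1 h1q h2 h2q hfarey
end

section
/- Let r = p/q ∈ ℚ∩(0,1), s = s(r), t = t(r). If x ∈ (π(s^∞), π(t^∞)) and the T-orbit of x avoids the open interval (π(st^∞), π(ts^∞)), then the binary expansion of x is a shift of an infinite concatenation of the blocks s and t. -/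
/-- `π(w) = Σ_j w_j 2^{-j}`. -/
noncomputable def piW (w : ℕ → Bool) : ℝ :=
  ∑' j : ℕ, (if w j then (1:ℝ) else 0) / 2 ^ (j + 1)

/-- The infinite periodic word `w^∞`. -/
def periodize (w : List Bool) (j : ℕ) : Bool := w.getD (j % w.length) false

/-- The infinite word `u v^∞`. -/
def wordThenPeriodic (u v : List Bool) (j : ℕ) : Bool :=
  if j < u.length then u.getD j false else periodize v (j - u.length)

/-- `w` is the infinite concatenation `a 0 ++ a 1 ++ a 2 ++ ⋯`. -/
def IsConcat (a : ℕ → List Bool) (w : ℕ → Bool) : Prop :=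
  ∀ n : ℕ, ∀ j < (((List.range n).map a).flatten).length,
    (((List.range n).map a).flatten).getD j false = w j


namespace Aux

def dig (w : ℕ → Bool) (j : ℕ) : ℝ := if w j then 1 else 0

lemma dig_nonneg (w j) : 0 ≤ dig w j := by unfold dig; split <;> norm_num
lemma dig_le_one (w j) : dig w j ≤ 1 := by unfold dig; split <;> norm_num

lemma summable_piW (w : ℕ → Bool) : Summable (fun j => dig w j / 2 ^ (j+1) : ℕ → ℝ) := by
  apply Summable.of_nonneg_of_le (fun j => div_nonneg (dig_nonneg w j) (by positivity)) (fun j => ?_)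
    ((summable_nat_add_iff 1).2 summable_geometric_two)
  have h2 : (0:ℝ) < 2 ^ (j+1) := by positivity
  rw [div_le_iff₀ h2, one_div, inv_pow, inv_mul_cancel₀ (by positivity)]
  exact dig_le_one w j

lemma piW_eq (w : ℕ → Bool) : piW w = ∑' j, dig w j / 2 ^ (j+1) := rfl

lemma piW_nonneg (w : ℕ → Bool) : 0 ≤ piW w :=
  tsum_nonneg (fun j => div_nonneg (dig_nonneg w j) (by positivity))

lemma piW_le_one (w : ℕ → Bool) : piW w ≤ 1 := by
  rw [piW_eq]
  have h : ∑' j : ℕ, (1:ℝ)/2 / 2^j = 1 := tsum_geometric_two' 1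
  calc ∑' j, dig w j / 2 ^ (j+1) ≤ ∑' j : ℕ, (1:ℝ)/2/2^j := by
        apply Summable.tsum_le_tsum _ (summable_piW w)
          ((summable_geometric_two.mul_left (1/2)).congr (fun j => by simp [mul_comm]; ring))
        intro j
        rw [div_le_div_iff₀ (by positivity) (by positivity)]
        have h2 : (0:ℝ) < 2 ^ j := by positivity
        have := dig_le_one w j
        rw [pow_succ]
        nlinarith
    _ = 1 := h

lemma piW_split (w : ℕ → Bool) (n : ℕ) :
    piW w = (∑ j ∈ Finset.range n, dig w j / 2 ^ (j+1)) + piW (fun j => w (j + n)) / 2 ^ n := by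
  rw [piW_eq, ← Summable.sum_add_tsum_nat_add n (summable_piW w)]
  congr 1
  rw [piW_eq, ← tsum_div_const]
  congr 1; funext j
  have : (2:ℝ) ^ (j + n + 1) = 2 ^ (j+1) * 2 ^ n := by ring
  rw [this, div_div]
  rfl

end Aux
namespace Aux

def LexLt (u v : ℕ → Bool) : Prop :=
  ∃ m, (∀ j < m, u j = v j) ∧ u m = false ∧ v m = true

def LexLe (u v : ℕ → Bool) : Prop := u = v ∨ LexLt u v

lemma lex_trichotomy (u v : ℕ → Bool) : LexLe u v ∨ LexLt v u := by
  by_cases h : u = v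
  · exact Or.inl (Or.inl h)
  · have hne : ∃ j, u j ≠ v j := by
      by_contra hc
      push_neg at hc
      exact h (funext hc)
    classical
    let m := Nat.find hne
    have hm : u m ≠ v m := Nat.find_spec hne
    have hpre : ∀ j < m, u j = v j := fun j hj => by
      by_contra hc; exact absurd (Nat.find_le hc) (not_le.2 hj)
    rcases Bool.eq_false_or_eq_true (u m) with h1 | h1 <;>
      rcases Bool.eq_false_or_eq_true (v m) with h2 | h2
    · exact absurd (h1.trans h2.symm) hm
    · exact Or.inr ⟨m, fun j hj => (hpre j hj).symm, h2, h1⟩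
    · exact Or.inl (Or.inr ⟨m, hpre, h1, h2⟩)
    · exact absurd (h1.trans h2.symm) hm

lemma geom_partial (j : ℕ) : ∑ i ∈ Finset.range j, (1:ℝ)/2^(i+1) = 1 - 1/2^j := by
  induction j with
  | zero => simp
  | succ n ih =>
    rw [Finset.sum_range_succ, ih, pow_succ]
    have : (0:ℝ) < 2 ^ n := by positivity
    field_simp
    ring

lemma partial_le (w : ℕ → Bool) (j : ℕ) :
    ∑ i ∈ Finset.range j, dig w i / 2^(i+1) ≤ 1 - 1/2^j := by
  rw [← geom_partial]
  apply Finset.sum_le_sum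
  intro i _
  gcongr
  exact dig_le_one w i

lemma partial_congr {u v : ℕ → Bool} (m : ℕ) (h : ∀ j < m, u j = v j) :
    ∑ i ∈ Finset.range m, dig u i / 2^(i+1) = ∑ i ∈ Finset.range m, dig v i / 2^(i+1) := by
  apply Finset.sum_congr rfl
  intro i hi
  rw [Finset.mem_range] at hi
  rw [dig, dig, h i hi]

lemma piW_split_succ (w : ℕ → Bool) (m : ℕ) :
    piW w = (∑ j ∈ Finset.range m, dig w j / 2 ^ (j+1)) + dig w m / 2^(m+1)
      + piW (fun j => w (j + (m+1))) / 2 ^ (m+1) := by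
  rw [piW_split w (m+1), Finset.sum_range_succ]

lemma piW_le_of_lexlt {u v : ℕ → Bool} (h : LexLt u v) : piW u ≤ piW v := by
  obtain ⟨m, hpre, hu, hv⟩ := h
  rw [piW_split_succ u m, piW_split_succ v m, partial_congr m hpre, dig, dig, hu, hv]
  have h1 : piW (fun j => u (j + (m+1))) ≤ 1 := piW_le_one _
  have h2 : 0 ≤ piW (fun j => v (j + (m+1))) := piW_nonneg _
  have hp : (0:ℝ) < 2^(m+1) := by positivity
  norm_num
  have e1 : piW (fun j => u (j + (m+1))) / 2^(m+1) ≤ (2^(m+1))⁻¹ := by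
    rw [inv_eq_one_div]; gcongr
  have e2 : (0:ℝ) ≤ piW (fun j => v (j + (m+1))) / 2^(m+1) := by positivity
  linarith

lemma piW_le_of_lexle {u v : ℕ → Bool} (h : LexLe u v) : piW u ≤ piW v := by
  rcases h with h | h
  · rw [h]
  · exact piW_le_of_lexlt h

lemma lexlt_of_piW_lt {u v : ℕ → Bool} (h : piW u < piW v) : LexLt u v := by
  rcases lex_trichotomy u v with hl | hl
  · rcases hl with hl | hl
    · rw [hl] at h; exact absurd h (lt_irrefl _)
    · exact hl
  · exact absurd (piW_le_of_lexlt hl) (not_le.2 h)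

lemma piW_lt_one_of_false {u : ℕ → Bool} {j : ℕ} (h : u j = false) : piW u < 1 := by
  rw [piW_split_succ u j, dig, h]
  have h1 : piW (fun i => u (i + (j+1))) ≤ 1 := piW_le_one _
  have h2 := partial_le u j
  have hp : (0:ℝ) < 2^(j+1) := by positivity
  have hq : (0:ℝ) < 2^j := by positivity
  have e1 : piW (fun i => u (i + (j+1))) / 2^(j+1) ≤ 1 / 2^(j+1) := by gcongr
  have : (1:ℝ)/2^(j+1) < 1/2^j := by
    rw [div_lt_div_iff₀ hp hq, pow_succ]; nlinarith
  norm_num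
  linarith

lemma piW_pos_of_true {u : ℕ → Bool} {j : ℕ} (h : u j = true) : 0 < piW u := by
  have hterm : (0:ℝ) < dig u j / 2^(j+1) := by
    have hd : dig u j = 1 := by rw [dig, h]; norm_num
    rw [hd]; positivity
  have := Summable.le_tsum (summable_piW u) j (fun i _ => div_nonneg (dig_nonneg u i) (by positivity))
  exact lt_of_lt_of_le hterm this

lemma tails_of_piW_eq {u v : ℕ → Bool} (h : LexLt u v) (heq : piW u = piW v) :
    ∃ m, (∀ j, u (j + m) = true) ∧ (∀ j, v (j + m) = false) := by
  obtain ⟨m, hpre, hu, hv⟩ := h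
  have hsplit := heq
  rw [piW_split_succ u m, piW_split_succ v m, partial_congr m hpre, dig, dig, hu, hv] at hsplit
  norm_num at hsplit
  have hp : (0:ℝ) < 2^(m+1) := by positivity
  have h1 : piW (fun j => u (j + (m+1))) ≤ 1 := piW_le_one _
  have h2 : 0 ≤ piW (fun j => v (j + (m+1))) := piW_nonneg _
  have h3 : 0 ≤ piW (fun j => u (j + (m+1))) := piW_nonneg _
  have h4 : piW (fun j => v (j + (m+1))) ≤ 1 := piW_le_one _
  have key : piW (fun j => u (j + (m+1))) = 1 + piW (fun j => v (j + (m+1))) := by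
    field_simp at hsplit
    nlinarith
  have hu1 : piW (fun j => u (j + (m+1))) = 1 := by linarith
  have hv0 : piW (fun j => v (j + (m+1))) = 0 := by linarith
  refine ⟨m+1, fun j => ?_, fun j => ?_⟩
  · by_contra hc
    have : u (j + (m+1)) = false := by simpa using hc
    exact absurd (hu1 ▸ piW_lt_one_of_false (u := fun i => u (i + (m+1))) (j := j) this) (lt_irrefl _)
  · by_contra hc
    have : v (j + (m+1)) = true := by simpa using hc
    have := piW_pos_of_true (u := fun i => v (i + (m+1))) (j := j) this
    rw [hv0] at this
    exact absurd this (lt_irrefl _)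

end Aux
namespace Aux

noncomputable def digs (x : ℝ) (j : ℕ) : Bool := decide (1/2 < T^[j] x)

lemma T_step (y : ℝ) : T y = 2 * y - (if decide (1/2 < y) then 1 else 0) := by
  rw [T]
  by_cases h : y ≤ 1/2
  · rw [if_pos h, if_neg (by simpa using h)]; ring
  · rw [if_neg h, if_pos (by simpa using not_le.1 h)]

lemma T_mem {y : ℝ} (hy : y ∈ Set.Icc (0:ℝ) 1) : T y ∈ Set.Icc (0:ℝ) 1 := by
  obtain ⟨h0, h1⟩ := hy
  rw [T]
  by_cases h : y ≤ 1/2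
  · rw [if_pos h]; constructor <;> linarith
  · rw [if_neg h]; push_neg at h; constructor <;> linarith

lemma iter_mem {x : ℝ} (hx : x ∈ Set.Icc (0:ℝ) 1) (n : ℕ) : T^[n] x ∈ Set.Icc (0:ℝ) 1 := by
  induction n with
  | zero => simpa using hx
  | succ n ih => rw [Function.iterate_succ_apply']; exact T_mem ih

lemma iter_step (x : ℝ) (n : ℕ) :
    T^[n+1] x = 2 * T^[n] x - dig (digs x) n := by
  rw [Function.iterate_succ_apply', T_step, dig, digs]

lemma partial_sum_eq (x : ℝ) (n : ℕ) :
    x = (∑ j ∈ Finset.range n, dig (digs x) j / 2^(j+1)) + T^[n] x / 2^n := by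
  induction n with
  | zero => simp
  | succ n ih =>
    rw [Finset.sum_range_succ, iter_step]
    have h2 : (0:ℝ) < 2^n := by positivity
    have hrw : (2:ℝ)^(n+1) = 2^n * 2 := by ring
    rw [hrw]
    nth_rewrite 1 [ih]
    field_simp
    ring

lemma piW_digs {x : ℝ} (hx : x ∈ Set.Icc (0:ℝ) 1) : piW (digs x) = x := by
  have hsum := summable_piW (digs x)
  have htend := hsum.hasSum.tendsto_sum_nat
  have htend2 : Filter.Tendsto (fun n => ∑ j ∈ Finset.range n, dig (digs x) j / 2^(j+1))
      Filter.atTop (nhds x) := by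
    have heq : ∀ n, ∑ j ∈ Finset.range n, dig (digs x) j / 2^(j+1) = x - T^[n] x / 2^n := by
      intro n; have := partial_sum_eq x n; linarith
    simp only [heq]
    have hz : Filter.Tendsto (fun n : ℕ => T^[n] x / 2^n) Filter.atTop (nhds 0) := by
      apply squeeze_zero (fun n => div_nonneg (iter_mem hx n).1 (by positivity)) (fun n => ?_)
        (tendsto_pow_atTop_nhds_zero_of_lt_one (by norm_num) (by norm_num : (1/2:ℝ) < 1))
      rw [one_div, inv_pow, inv_eq_one_div]
      gcongr
      exact (iter_mem hx n).2
    have := Filter.Tendsto.sub (tendsto_const_nhds (x := x)) hz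
    simpa using this
  exact tendsto_nhds_unique htend htend2

end Aux
namespace Aux

lemma iter_eq_piW_shift {x : ℝ} (hx : x ∈ Set.Icc (0:ℝ) 1) (n : ℕ) :
    T^[n] x = piW (fun j => digs x (j + n)) := by
  have h := piW_split (digs x) n
  rw [piW_digs hx] at h
  have h2 := partial_sum_eq x n
  have hp : (0:ℝ) < 2^n := by positivity
  have h3 : piW (fun j => digs x (j + n)) / 2^n = T^[n] x / 2^n := by linarith
  field_simp at h3
  linarith

end Aux
namespace Aux

def shiftW (n : ℕ) (w : ℕ → Bool) : ℕ → Bool := fun j => w (j + n)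

lemma not_lexlt_of_lexle {u v : ℕ → Bool} (h : LexLe u v) : ¬ LexLt v u := by
  rintro ⟨m, hpre, hv, hu⟩
  rcases h with rfl | ⟨m', hpre', hu', hv'⟩
  · rw [hv] at hu; exact Bool.false_ne_true hu
  · rcases lt_trichotomy m m' with hlt | rfl | hgt
    · have := hpre' m hlt; rw [hu, hv] at this; simp at this
    · rw [hu'] at hu; simp at hu
    · have := hpre m' hgt; rw [hu', hv'] at this; simp at this

lemma prefix_determined {lo hi v : ℕ → Bool} {c : ℕ → Bool} (n : ℕ)
    (hlo : ∀ j < n, lo j = c j) (hhi : ∀ j < n, hi j = c j)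
    (h1 : LexLe lo v) (h2 : LexLe v hi) : ∀ j < n, v j = c j := by
  intro j hj
  induction j using Nat.strong_induction_on with
  | _ j ih =>
  by_contra hc
  rcases Bool.eq_false_or_eq_true (c j) with hcj | hcj
  · -- c j = true, so v j = false; then v <lex lo
    have hvj : v j = false := by
      rcases Bool.eq_false_or_eq_true (v j) with h | h
      · rw [hcj] at hc; exact absurd h hc
      · exact h
    apply not_lexlt_of_lexle h1
    exact ⟨j, fun i hi' => by rw [hlo i (hi'.trans hj), ← ih i hi' (hi'.trans hj)],
      hvj, by rw [hlo j hj, hcj]⟩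
  · have hvj : v j = true := by
      rcases Bool.eq_false_or_eq_true (v j) with h | h
      · exact h
      · rw [hcj] at hc; exact absurd h hc
    apply not_lexlt_of_lexle h2
    exact ⟨j, fun i hi' => by rw [hhi i (hi'.trans hj), ← ih i hi' (hi'.trans hj)],
      by rw [hhi j hj, hcj], hvj⟩

lemma lexle_shift {u v : ℕ → Bool} (n : ℕ) (hagree : ∀ j < n, u j = v j)
    (h : LexLe u v) : LexLe (shiftW n u) (shiftW n v) := by
  rcases h with rfl | ⟨m, hpre, hu, hv⟩
  · exact Or.inl rfl
  · have hmn : n ≤ m := by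
      by_contra hc
      push_neg at hc
      have := hagree m hc; rw [hu, hv] at this; exact Bool.false_ne_true this
    refine Or.inr ⟨m - n, fun j hj => ?_, ?_, ?_⟩
    · exact hpre (j + n) (by omega)
    · show u (m - n + n) = false; rwa [Nat.sub_add_cancel hmn]
    · show v (m - n + n) = true; rwa [Nat.sub_add_cancel hmn]

end Aux

namespace Aux

lemma periodize_eq_getD {l : List Bool} {j : ℕ} (hj : j < l.length) :
    periodize l j = l.getD j false := by rw [periodize, Nat.mod_eq_of_lt hj]

lemma periodize_shift (l : List Bool) (j : ℕ) :
    periodize l (j + l.length) = periodize l j := by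
  rw [periodize, periodize, Nat.add_mod_right]

lemma wtp_lt {u v : List Bool} {j : ℕ} (hj : j < u.length) :
    wordThenPeriodic u v j = u.getD j false := if_pos hj

lemma wtp_shift (u v : List Bool) (j : ℕ) :
    wordThenPeriodic u v (j + u.length) = periodize v j := by
  rw [wordThenPeriodic, if_neg (by omega), Nat.add_sub_cancel]

lemma wtp_far (u v : List Bool) {i : ℕ} (hi : i < v.length) (m : ℕ) :
    ∃ j, wordThenPeriodic u v (j + m) = v.getD i false := by
  have hvpos : 0 < v.length := by omega
  set P := u.length + v.length * (m + 1) + i with hP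
  have hPm : m ≤ P := by
    have : m + 1 ≤ v.length * (m+1) := Nat.le_mul_of_pos_left _ hvpos
    omega
  refine ⟨P - m, ?_⟩
  rw [Nat.sub_add_cancel hPm]
  have h1 : ¬ P < u.length := by omega
  rw [wordThenPeriodic, if_neg h1]
  have h2 : P - u.length = v.length * (m+1) + i := by omega
  rw [h2, periodize, Nat.mul_add_mod, Nat.mod_eq_of_lt hi]

end Aux

open Aux in
theorem stmt_15 (p q : ℕ) (hp : 0 < p) (hpq : p < q) (hco : Nat.Coprime p q)
    (s t : List Bool) (hs : IsSWord p q s) (ht : IsTWord p q t)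
    (x : ℝ) (hx : x ∈ Set.Ioo (piW (periodize s)) (piW (periodize t)))
    (horbit : ∀ n : ℕ, T^[n] x ∉
      Set.Ioo (piW (wordThenPeriodic s t)) (piW (wordThenPeriodic t s))) :
    ∃ w : ℕ → Bool, piW w = x ∧
      ∃ (a : ℕ → List Bool) (w0 : ℕ → Bool) (k : ℕ),
        (∀ i, a i = s ∨ a i = t) ∧ IsConcat a w0 ∧ w = fun j => w0 (j + k) := by
  classical
  obtain ⟨hsl, hsc, -, hsh, -⟩ := hs
  obtain ⟨htl, htc, -, hth, -⟩ := ht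
  obtain ⟨hx1, hx2⟩ := hx
  have hq : 0 < q := lt_trans hp hpq
  -- first letters
  have hs0 : s.getD 0 false = false := by
    cases s with
    | nil => simp at hsh
    | cons a l => simp at hsh; simp [hsh]
  have ht0 : t.getD 0 false = true := by
    cases t with
    | nil => simp at hth
    | cons a l => simp at hth; simp [hth]
  -- t has a false letter, s has a true letter
  have htf : ∃ i < q, t.getD i false = false := by
    by_contra hc
    push_neg at hc
    have hall : ∀ b ∈ t, true = b := by
      intro b hb
      obtain ⟨i, hilen, hgi⟩ := List.mem_iff_getElem.1 hb
      have := hc i (by omega)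
      rw [List.getD_eq_getElem t false hilen, hgi] at this
      simp at this
      exact this.symm
    have := List.count_eq_length.2 hall
    rw [htc, htl] at this
    omega
  have hst : ∃ i < q, s.getD i false = true := by
    have hmem : true ∈ s := List.count_pos_iff.1 (by rw [hsc]; exact hp)
    obtain ⟨i, hilen, hgi⟩ := List.mem_iff_getElem.1 hmem
    exact ⟨i, by omega, by rw [List.getD_eq_getElem s false hilen, hgi]⟩
  -- notation
  set S := periodize s with hSdef
  set Tw := periodize t with hTwdef
  set ST := wordThenPeriodic s t with hSTdef
  set TS := wordThenPeriodic t s with hTSdef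
  have hSpre : ∀ j < q, S j = s.getD j false := fun j hj =>
    periodize_eq_getD (by rw [hsl]; exact hj)
  have hTwpre : ∀ j < q, Tw j = t.getD j false := fun j hj =>
    periodize_eq_getD (by rw [htl]; exact hj)
  have hSTpre : ∀ j < q, ST j = s.getD j false := fun j hj => wtp_lt (by rw [hsl]; exact hj)
  have hTSpre : ∀ j < q, TS j = t.getD j false := fun j hj => wtp_lt (by rw [htl]; exact hj)
  have hSshift : shiftW q S = S := funext fun j => by
    rw [hSdef]; show periodize s (j + q) = periodize s j
    rw [← hsl]; exact periodize_shift s j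
  have hTwshift : shiftW q Tw = Tw := funext fun j => by
    rw [hTwdef]; show periodize t (j + q) = periodize t j
    rw [← htl]; exact periodize_shift t j
  have hSTshift : shiftW q ST = Tw := funext fun j => by
    rw [hSTdef, hTwdef]; show wordThenPeriodic s t (j + q) = periodize t j
    rw [← hsl]; exact wtp_shift s t j
  have hTSshift : shiftW q TS = S := funext fun j => by
    rw [hTSdef, hSdef]; show wordThenPeriodic t s (j + q) = periodize s j
    rw [← htl]; exact wtp_shift t s j
  -- x in [0,1], digits
  have hx01 : x ∈ Set.Icc (0:ℝ) 1 :=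
    ⟨le_of_lt (lt_of_le_of_lt (piW_nonneg S) hx1), le_of_lt (lt_of_lt_of_le hx2 (piW_le_one Tw))⟩
  set w := digs x with hwdef
  have hpw : piW w = x := piW_digs hx01
  have hbase1 : LexLe S w := Or.inr (lexlt_of_piW_lt (by rw [hpw]; exact hx1))
  have hbase2 : LexLe w Tw := Or.inr (lexlt_of_piW_lt (by rw [hpw]; exact hx2))
  -- conversions from real inequalities to lex inequalities
  have convST : ∀ v : ℕ → Bool, piW v ≤ piW ST → LexLe v ST := by
    intro v hv
    rcases lex_trichotomy v ST with h | h
    · exact h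
    · exfalso
      have heq : piW ST = piW v := le_antisymm (piW_le_of_lexlt h) hv
      obtain ⟨m, hmt, -⟩ := tails_of_piW_eq h heq
      obtain ⟨i, hi, hti⟩ := htf
      obtain ⟨j, hj⟩ := wtp_far s t (by rw [htl]; exact hi) m
      rw [← hSTdef] at hj
      rw [hmt j, hti] at hj
      simp at hj
  have convTS : ∀ v : ℕ → Bool, piW TS ≤ piW v → LexLe TS v := by
    intro v hv
    rcases lex_trichotomy TS v with h | h
    · exact h
    · exfalso
      have heq : piW v = piW TS := le_antisymm (piW_le_of_lexlt h) hv
      obtain ⟨m, -, hmf⟩ := tails_of_piW_eq h heq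
      obtain ⟨i, hi, hti⟩ := hst
      obtain ⟨j, hj⟩ := wtp_far t s (by rw [hsl]; exact hi) m
      rw [← hTSdef] at hj
      rw [hmf j, hti] at hj
      simp at hj
  -- the block function
  set a : ℕ → List Bool := fun n => if w (n*q) then t else s with hadef
  -- main step
  have step : ∀ n : ℕ, LexLe S (shiftW (n*q) w) → LexLe (shiftW (n*q) w) Tw →
      (∀ j < q, w (n*q + j) = (a n).getD j false) ∧
      LexLe S (shiftW ((n+1)*q) w) ∧ LexLe (shiftW ((n+1)*q) w) Tw := by
    intro n h1 h2
    have hpv : piW (shiftW (n*q) w) = T^[n*q] x := (iter_eq_piW_shift hx01 (n*q)).symm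
    have hshift : shiftW ((n+1)*q) w = shiftW q (shiftW (n*q) w) := by
      funext j; show w (j + (n+1)*q) = w (j + q + n*q); congr 1; ring
    have hcases : piW (shiftW (n*q) w) ≤ piW ST ∨ piW TS ≤ piW (shiftW (n*q) w) := by
      have hnot := horbit (n*q)
      rw [Set.mem_Ioo, not_and, not_lt] at hnot
      rw [hpv]
      by_cases hc : piW ST < T^[n*q] x
      · exact Or.inr (hnot hc)
      · exact Or.inl (not_lt.1 hc)
    rcases hcases with hc | hc
    · have hvST : LexLe (shiftW (n*q) w) ST := convST _ hc
      have hpref : ∀ j < q, (shiftW (n*q) w) j = s.getD j false :=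
        prefix_determined q hSpre hSTpre h1 hvST
      have hv0 : w (n*q) = false := by
        have h := hpref 0 hq
        rw [hs0] at h
        simpa [shiftW] using h
      have han : a n = s := by rw [hadef]; simp [hv0]
      refine ⟨fun j hj => ?_, ?_, ?_⟩
      · rw [han]
        have h := hpref j hj
        rw [shiftW] at h
        rwa [Nat.add_comm (n*q) j]
      · have := lexle_shift q (fun j hj => by rw [hSpre j hj, hpref j hj]) h1
        rw [hSshift] at this
        rwa [hshift]
      · have := lexle_shift q (fun j hj => by rw [hpref j hj, hSTpre j hj]) hvST
        rw [hSTshift] at this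
        rwa [hshift]
    · have hvTS : LexLe TS (shiftW (n*q) w) := convTS _ hc
      have hpref : ∀ j < q, (shiftW (n*q) w) j = t.getD j false :=
        prefix_determined q hTSpre hTwpre hvTS h2
      have hv0 : w (n*q) = true := by
        have h := hpref 0 hq
        rw [ht0] at h
        simpa [shiftW] using h
      have han : a n = t := by rw [hadef]; simp [hv0]
      refine ⟨fun j hj => ?_, ?_, ?_⟩
      · rw [han]
        have h := hpref j hj
        rw [shiftW] at h
        rwa [Nat.add_comm (n*q) j]
      · have := lexle_shift q (fun j hj => by rw [hTSpre j hj, hpref j hj]) hvTS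
        rw [hTSshift] at this
        rwa [hshift]
      · have := lexle_shift q (fun j hj => by rw [hpref j hj, hTwpre j hj]) h2
        rw [hTwshift] at this
        rwa [hshift]
  -- the invariant holds for all n
  have inv : ∀ n, LexLe S (shiftW (n*q) w) ∧ LexLe (shiftW (n*q) w) Tw := by
    intro n
    induction n with
    | zero =>
      have h0 : shiftW (0*q) w = w := funext fun j => by simp [shiftW]
      rw [h0]
      exact ⟨hbase1, hbase2⟩
    | succ n ih => exact ⟨(step n ih.1 ih.2).2.1, (step n ih.1 ih.2).2.2⟩
  have hblock : ∀ n, ∀ j < q, w (n*q + j) = (a n).getD j false :=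
    fun n => (step n (inv n).1 (inv n).2).1
  have halen : ∀ i, (a i).length = q := by
    intro i
    rw [hadef]
    by_cases h : w (i*q) = true <;> simp [h, hsl, htl]
  -- flatten length
  have hlen : ∀ n, (((List.range n).map a).flatten).length = n*q := by
    intro n
    induction n with
    | zero => simp
    | succ n ih =>
      rw [List.range_succ, List.map_append, List.flatten_append]
      simp only [List.map_cons, List.map_nil, List.flatten_cons, List.flatten_nil,
        List.append_nil, List.length_append, ih, halen n]
      ring
  have hconcat : IsConcat a w := by
    intro n
    induction n with
    | zero => intro j hj; simp at hj
    | succ n ih =>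
      intro j hj
      rw [hlen (n+1)] at hj
      rw [List.range_succ, List.map_append, List.flatten_append]
      simp only [List.map_cons, List.map_nil, List.flatten_cons, List.flatten_nil,
        List.append_nil]
      by_cases hcase : j < n*q
      · rw [List.getD_append _ _ _ _ (by rw [hlen n]; exact hcase)]
        exact ih j (by rw [hlen n]; exact hcase)
      · push_neg at hcase
        rw [List.getD_append_right _ _ _ _ (by rw [hlen n]; exact hcase), hlen n]
        have hjr : j - n*q < q := by
          have : (n+1)*q = n*q + q := by ring
          omega
        have := hblock n (j - n*q) hjr
        rw [← this]
        congr 1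
        omega
  refine ⟨w, hpw, a, w, 0, fun i => ?_, hconcat, ?_⟩
  · rw [hadef]
    by_cases h : w (i*q) = true
    · right; simp [h]
    · left; simp [h]
  · rfl
end
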